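/- arXiv:2008.05529 — 17 statements merged into one kernel-verified Lean document; each statement's English description precedes it below -/
import Mathlib

section
/- Let R be a G-graded commutative ring, M a graded R-module, N a graded R-submodule, and s a nonzero homogeneous element of R. Then N is a graded s-prime submodule of M if and only if for every graded ideal I of R and every graded submodule K of M with IK ⊆ N, either sI ⊆ (N :_R M) or sK ⊆ N. -/
open DirectSum

variable {G R M : Type*}

/-- A submodule is graded if it contains all homogeneous components of its elements. -/
def IsGradedSubmodule [CommRing R] [AddCommGroup M] [Module R M] [DecidableEq G]
    (ℳ : G → AddSubgroup M) [DirectSum.Decomposition ℳ] (N : Submodule R M) : Prop :=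
  ∀ m ∈ N, ∀ g : G, (DirectSum.decompose ℳ m g : M) ∈ N

/-- A graded ideal of a graded ring. -/
def IsGradedIdeal [CommRing R] [DecidableEq G]
    (𝒜 : G → AddSubgroup R) [DirectSum.Decomposition 𝒜] (P : Ideal R) : Prop :=
  ∀ r ∈ P, ∀ g : G, (DirectSum.decompose 𝒜 r g : R) ∈ P

/-- `N` is a graded `s`-prime submodule: `s ∉ (N :_R M)` and for homogeneous `r`, `m`,
`r • m ∈ N` implies `s * r ∈ (N :_R M)` or `s • m ∈ N`. -/
def IsGradedSPrime [CommRing R] [AddCommGroup M] [Module R M]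
    (𝒜 : G → AddSubgroup R) (ℳ : G → AddSubgroup M) (s : R) (N : Submodule R M) : Prop :=
  s ∉ N.colon ⊤ ∧
  ∀ (r : R) (m : M), SetLike.IsHomogeneousElem 𝒜 r → SetLike.IsHomogeneousElem ℳ m →
    r • m ∈ N → s * r ∈ N.colon ⊤ ∨ s • m ∈ N

/-- `P` is a graded `s`-prime ideal. -/
def IsGradedSPrimeIdeal [CommRing R]
    (𝒜 : G → AddSubgroup R) (s : R) (P : Ideal R) : Prop :=
  s ∉ P ∧
  ∀ a b : R, SetLike.IsHomogeneousElem 𝒜 a → SetLike.IsHomogeneousElem 𝒜 b →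
    a * b ∈ P → s * a ∈ P ∨ s * b ∈ P

/-- `K` is a graded prime submodule. -/
def IsGradedPrime [CommRing R] [AddCommGroup M] [Module R M]
    (𝒜 : G → AddSubgroup R) (ℳ : G → AddSubgroup M) (K : Submodule R M) : Prop :=
  K ≠ ⊤ ∧
  ∀ (r : R) (m : M), SetLike.IsHomogeneousElem 𝒜 r → SetLike.IsHomogeneousElem ℳ m →
    r • m ∈ K → r ∈ K.colon ⊤ ∨ m ∈ K

lemma decompose_smul_mem_span [AddGroup G] [DecidableEq G] [CommRing R] [AddCommGroup M]
    [Module R M] (𝒜 : G → AddSubgroup R) (ℳ : G → AddSubgroup M)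
    [GradedRing 𝒜] [DirectSum.Decomposition ℳ] [SetLike.GradedSMul 𝒜 ℳ]
    {m : M} (hm : SetLike.IsHomogeneousElem ℳ m) (t : R) (g : G) :
    (DirectSum.decompose ℳ (t • m) g : M) ∈ Submodule.span R {m} := by
  obtain ⟨j, hmj⟩ := hm
  induction t using DirectSum.Decomposition.inductionOn 𝒜 with
  | zero => simp
  | homogeneous a =>
    rename_i i
    obtain ⟨a, hai⟩ := a
    have hsm : (a : R) • m ∈ ℳ (i + j) := SetLike.GradedSMul.smul_mem hai hmj
    by_cases hg : i + j = g
    · rw [← hg, DirectSum.decompose_of_mem_same ℳ hsm]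
      exact Submodule.smul_mem _ _ (Submodule.mem_span_singleton_self m)
    · rw [DirectSum.decompose_of_mem_ne ℳ hsm hg]
      exact Submodule.zero_mem _
  | add t₁ t₂ h₁ h₂ =>
    rw [add_smul, DirectSum.decompose_add]
    exact Submodule.add_mem _ h₁ h₂

/-- `N` is graded `s`-prime iff for every graded ideal `I` and graded
submodule `K` with `I • K ⊆ N`, `sI ⊆ (N :_R M)` or `sK ⊆ N`. -/
theorem stmt_0 [AddGroup G] [DecidableEq G] [CommRing R] [AddCommGroup M] [Module R M]
    (𝒜 : G → AddSubgroup R) (ℳ : G → AddSubgroup M)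
    [GradedRing 𝒜] [DirectSum.Decomposition ℳ] [SetLike.GradedSMul 𝒜 ℳ]
    (N : Submodule R M) (hN : IsGradedSubmodule ℳ N)
    (s : R) (hs0 : s ≠ 0) (hsh : SetLike.IsHomogeneousElem 𝒜 s) (hsN : s ∉ N.colon ⊤) :
    IsGradedSPrime 𝒜 ℳ s N ↔
      ∀ (I : Ideal R) (K : Submodule R M), IsGradedIdeal 𝒜 I → IsGradedSubmodule ℳ K →
        I • K ≤ N → (∀ a ∈ I, s * a ∈ N.colon ⊤) ∨ (∀ k ∈ K, s • k ∈ N) := by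
  classical
  constructor
  · rintro ⟨-, hP⟩ I K hI hK hIK
    by_cases hcase : ∀ a ∈ I, s * a ∈ N.colon ⊤
    · exact Or.inl hcase
    · push_neg at hcase
      obtain ⟨a, haI, has⟩ := hcase
      -- find a homogeneous component a_g of a with s * a_g ∉ N.colon ⊤
      have : ∃ g : G, s * (DirectSum.decompose 𝒜 a g : R) ∉ N.colon ⊤ := by
        by_contra hall
        push_neg at hall
        apply has
        have ha : a = ∑ g ∈ (DirectSum.decompose 𝒜 a).support,
            (DirectSum.decompose 𝒜 a g : R) := (DirectSum.sum_support_decompose 𝒜 a).symm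
        rw [ha, Finset.mul_sum]
        exact Submodule.sum_mem _ fun g _ => hall g
      obtain ⟨g, hg⟩ := this
      refine Or.inr fun k hk => ?_
      have hk' : k = ∑ h ∈ (DirectSum.decompose ℳ k).support,
          (DirectSum.decompose ℳ k h : M) := (DirectSum.sum_support_decompose ℳ k).symm
      rw [hk', Finset.smul_sum]
      refine Submodule.sum_mem _ fun h _ => ?_
      have hmem : (DirectSum.decompose 𝒜 a g : R) • (DirectSum.decompose ℳ k h : M) ∈ N :=
        hIK (Submodule.smul_mem_smul (hI a haI g) (hK k hk h))
      rcases hP _ _ ⟨g, SetLike.coe_mem _⟩ ⟨h, SetLike.coe_mem _⟩ hmem with h1 | h2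
      · exact absurd h1 hg
      · exact h2
  · intro H
    refine ⟨hsN, fun r m hr hm hrm => ?_⟩
    set I : Ideal R := Ideal.span {r} with hIdef
    set K : Submodule R M := N ⊔ Submodule.span R {m} with hKdef
    have hIgr : IsGradedIdeal 𝒜 I := by
      intro x hx g
      exact Ideal.homogeneous_span 𝒜 {r} (by rintro y rfl; exact hr) g hx
    have hKgr : IsGradedSubmodule ℳ K := by
      intro x hx g
      obtain ⟨n, hn, y, hy, rfl⟩ := Submodule.mem_sup.mp hx
      obtain ⟨t, rfl⟩ := Submodule.mem_span_singleton.mp hy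
      rw [DirectSum.decompose_add]
      push_cast
      exact Submodule.add_mem _ (Submodule.mem_sup_left (hN n hn g))
        (Submodule.mem_sup_right (decompose_smul_mem_span 𝒜 ℳ hm t g))
    have hIK : I • K ≤ N := by
      refine Submodule.smul_le.mpr fun a ha k hk => ?_
      obtain ⟨t, rfl⟩ := Ideal.mem_span_singleton'.mp ha
      obtain ⟨n, hn, y, hy, rfl⟩ := Submodule.mem_sup.mp hk
      obtain ⟨u, rfl⟩ := Submodule.mem_span_singleton.mp hy
      have h1 : (t * r) • n ∈ N := by
        rw [mul_smul]; exact Submodule.smul_mem _ t (Submodule.smul_mem _ r hn)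
      have h2 : (t * r) • (u • m) ∈ N := by
        rw [smul_comm, mul_smul]
        exact Submodule.smul_mem _ u (Submodule.smul_mem _ t hrm)
      rw [smul_add]
      exact Submodule.add_mem _ h1 h2
    rcases H I K hIgr hKgr hIK with h1 | h2
    · exact Or.inl (h1 r (Ideal.subset_span rfl))
    · exact Or.inr (h2 m (Submodule.mem_sup_right (Submodule.mem_span_singleton_self m)))
end

section
/- Let R be a G-graded commutative ring, P a graded ideal of R, and s a nonzero homogeneous element. Then P is a graded s-prime ideal if and only if for all graded ideals I, J of R with IJ ⊆ P, one has sI ⊆ P or sJ ⊆ P. -/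
open DirectSum

variable {G R M : Type*}

/-- a graded ideal `P` is graded `s`-prime iff for all graded ideals `I`, `J`
with `IJ ⊆ P`, one has `sI ⊆ P` or `sJ ⊆ P`. -/
theorem stmt_1 [AddGroup G] [DecidableEq G] [CommRing R]
    (𝒜 : G → AddSubgroup R) [GradedRing 𝒜]
    (P : Ideal R) (hP : IsGradedIdeal 𝒜 P)
    (s : R) (hs0 : s ≠ 0) (hsh : SetLike.IsHomogeneousElem 𝒜 s) (hsP : s ∉ P) :
    IsGradedSPrimeIdeal 𝒜 s P ↔
      ∀ I J : Ideal R, IsGradedIdeal 𝒜 I → IsGradedIdeal 𝒜 J →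
        I * J ≤ P → (∀ a ∈ I, s * a ∈ P) ∨ (∀ b ∈ J, s * b ∈ P) := by
  classical
  constructor
  · rintro ⟨-, hsp⟩ I J hI hJ hIJ
    by_contra hcon
    push_neg at hcon
    obtain ⟨⟨a, haI, haP⟩, ⟨b, hbJ, hbP⟩⟩ := hcon
    -- find homogeneous components whose product with s is not in P
    have ha' : ∃ g : G, s * (decompose 𝒜 a g : R) ∉ P := by
      by_contra h
      push_neg at h
      apply haP
      have : s * a = ∑ g ∈ DFinsupp.support (decompose 𝒜 a),
          s * (decompose 𝒜 a g : R) := by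
        rw [← Finset.mul_sum, DirectSum.sum_support_decompose 𝒜 a]
      rw [this]
      exact Ideal.sum_mem _ fun g _ => h g
    have hb' : ∃ g : G, s * (decompose 𝒜 b g : R) ∉ P := by
      by_contra h
      push_neg at h
      apply hbP
      have : s * b = ∑ g ∈ DFinsupp.support (decompose 𝒜 b),
          s * (decompose 𝒜 b g : R) := by
        rw [← Finset.mul_sum, DirectSum.sum_support_decompose 𝒜 b]
      rw [this]
      exact Ideal.sum_mem _ fun g _ => h g
    obtain ⟨ga, hga⟩ := ha'
    obtain ⟨gb, hgb⟩ := hb'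
    have hmem : (decompose 𝒜 a ga : R) * (decompose 𝒜 b gb : R) ∈ P := by
      apply hIJ
      exact Ideal.mul_mem_mul (hI a haI ga) (hJ b hbJ gb)
    rcases hsp _ _ ⟨ga, SetLike.coe_mem _⟩ ⟨gb, SetLike.coe_mem _⟩ hmem with h | h
    · exact hga h
    · exact hgb h
  · intro h
    refine ⟨hsP, fun a b ha hb hab => ?_⟩
    have hIg : IsGradedIdeal 𝒜 (Ideal.span {a}) := by
      intro r hr g
      exact Ideal.homogeneous_span 𝒜 {a} (by rintro x rfl; exact ha) g hr
    have hJg : IsGradedIdeal 𝒜 (Ideal.span {b}) := by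
      intro r hr g
      exact Ideal.homogeneous_span 𝒜 {b} (by rintro x rfl; exact hb) g hr
    have hle : Ideal.span {a} * Ideal.span {b} ≤ P := by
      rw [Ideal.span_singleton_mul_span_singleton]
      exact (Ideal.span_singleton_le_iff_mem P).mpr hab
    rcases h _ _ hIg hJg hle with h' | h'
    · exact Or.inl (h' a (Ideal.mem_span_singleton_self a))
    · exact Or.inr (h' b (Ideal.mem_span_singleton_self b))
end

section
/- Let M be a graded R-module, N a graded submodule, and s a nonzero homogeneous element of R. If N is a graded s-prime submodule of M, then (N :_R M) is a graded s-prime ideal of R. -/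
open DirectSum

variable {G R M : Type*}

/-- if `N` is a graded `s`-prime submodule, then `(N :_R M)` is a graded
`s`-prime ideal. -/
theorem stmt_2 [AddGroup G] [DecidableEq G] [CommRing R] [AddCommGroup M] [Module R M]
    (𝒜 : G → AddSubgroup R) (ℳ : G → AddSubgroup M)
    [GradedRing 𝒜] [DirectSum.Decomposition ℳ] [SetLike.GradedSMul 𝒜 ℳ]
    (N : Submodule R M) (hN : IsGradedSubmodule ℳ N)
    (s : R) (hs0 : s ≠ 0) (hsh : SetLike.IsHomogeneousElem 𝒜 s)
    (h : IsGradedSPrime 𝒜 ℳ s N) :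
    IsGradedSPrimeIdeal 𝒜 s (N.colon ⊤) := by
  classical
  refine ⟨h.1, fun a b ha hb hab => ?_⟩
  by_cases hsa : s * a ∈ N.colon ⊤
  · exact Or.inl hsa
  · right
    rw [Submodule.mem_colon]
    intro m _
    rw [← DirectSum.sum_support_decompose ℳ m, Finset.smul_sum]
    refine Submodule.sum_mem _ fun g hg => ?_
    obtain ⟨i, hbi⟩ := hb
    have hmg : SetLike.IsHomogeneousElem ℳ ((decompose ℳ m g : M)) := ⟨g, (decompose ℳ m g).2⟩
    have hbm : SetLike.IsHomogeneousElem ℳ (b • (decompose ℳ m g : M)) :=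
      ⟨i + g, SetLike.GradedSMul.smul_mem hbi (decompose ℳ m g).2⟩
    have habm : a • (b • (decompose ℳ m g : M)) ∈ N := by
      rw [smul_smul]
      exact Submodule.mem_colon.mp hab _ trivial
    rcases h.2 a (b • (decompose ℳ m g : M)) ha hbm habm with h1 | h2
    · exact absurd h1 hsa
    · rw [mul_smul]
      exact h2
end

section
/- Let M be a graded multiplication R-module, N a graded submodule of M, and s a nonzero homogeneous element of R. If (N :_R M) is a graded s-prime ideal of R, then N is a graded s-prime submodule of M. -/
open DirectSum

variable {G R M : Type*}

section Aux

variable [AddGroup G] [DecidableEq G] [CommRing R] [AddCommGroup M] [Module R M]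
    (𝒜 : G → AddSubgroup R) (ℳ : G → AddSubgroup M)
    [GradedRing 𝒜] [DirectSum.Decomposition ℳ] [SetLike.GradedSMul 𝒜 ℳ]

include 𝒜

lemma decompose_smul_homog (a : R) {h : G} {x : M} (hx : x ∈ ℳ h) (g : G) :
    (DirectSum.decompose ℳ (a • x) (g + h) : M) = (DirectSum.decompose 𝒜 a g : R) • x := by
  induction a using DirectSum.Decomposition.inductionOn 𝒜 with
  | zero => simp
  | @homogeneous g' a =>
    have hax : (a : R) • x ∈ ℳ (g' + h) := SetLike.GradedSMul.smul_mem a.2 hx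
    by_cases hg : g' = g
    · subst hg
      rw [DirectSum.decompose_of_mem_same ℳ hax, DirectSum.decompose_of_mem_same 𝒜 a.2]
    · rw [DirectSum.decompose_of_mem_ne ℳ hax (by
        intro hc; exact hg (add_right_cancel hc)),
        DirectSum.decompose_of_mem_ne 𝒜 a.2 hg, zero_smul]
  | add b c hb hc =>
    rw [add_smul, DirectSum.decompose_add, DirectSum.add_apply, AddSubgroup.coe_add, hb, hc,
      DirectSum.decompose_add, DirectSum.add_apply, AddSubgroup.coe_add, add_smul]

lemma colon_graded {K : Submodule R M} (hK : IsGradedSubmodule ℳ K)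
    {a : R} (ha : a ∈ K.colon ⊤) (g : G) :
    (DirectSum.decompose 𝒜 a g : R) ∈ K.colon ⊤ := by
  rw [Submodule.mem_colon]
  intro x _
  classical
  have hx := DirectSum.sum_support_decompose ℳ x
  rw [← hx, Finset.smul_sum]
  refine Submodule.sum_mem _ fun i _ => ?_
  rw [← decompose_smul_homog 𝒜 ℳ a (DirectSum.decompose ℳ x i).2 g]
  exact hK _ (Submodule.mem_colon.mp ha _ trivial) _

lemma span_singleton_graded {m : M} (hm : SetLike.IsHomogeneousElem ℳ m) :
    IsGradedSubmodule ℳ (Submodule.span R {m}) := by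
  obtain ⟨gm, hgm⟩ := hm
  intro y hy g
  obtain ⟨a, rfl⟩ := Submodule.mem_span_singleton.mp hy
  have : g = (g - gm) + gm := (sub_add_cancel g gm).symm
  rw [this, decompose_smul_homog 𝒜 ℳ a hgm]
  exact Submodule.smul_mem _ _ (Submodule.mem_span_singleton_self m)

end Aux

theorem stmt_3' [AddGroup G] [DecidableEq G] [CommRing R] [AddCommGroup M] [Module R M]
    (𝒜 : G → AddSubgroup R) (ℳ : G → AddSubgroup M)
    [GradedRing 𝒜] [DirectSum.Decomposition ℳ] [SetLike.GradedSMul 𝒜 ℳ]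
    (hmult : ∀ K : Submodule R M, IsGradedSubmodule ℳ K → K = K.colon ⊤ • (⊤ : Submodule R M))
    (N : Submodule R M) (hN : IsGradedSubmodule ℳ N)
    (s : R) (hs0 : s ≠ 0) (hsh : SetLike.IsHomogeneousElem 𝒜 s)
    (h : IsGradedSPrimeIdeal 𝒜 s (N.colon ⊤)) :
    IsGradedSPrime 𝒜 ℳ s N := by
  refine ⟨h.1, fun r m hr hm hrm => ?_⟩
  classical
  set K := Submodule.span R {m} with hK
  have hKgr := span_singleton_graded 𝒜 ℳ hm
  set J := K.colon ⊤ with hJ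
  -- r * b ∈ N.colon ⊤ for every b ∈ J
  have hrb : ∀ b ∈ J, r * b ∈ N.colon ⊤ := by
    intro b hb
    rw [Submodule.mem_colon]
    intro x _
    have hbx : b • x ∈ K := Submodule.mem_colon.mp hb x trivial
    obtain ⟨c, hc⟩ := Submodule.mem_span_singleton.mp hbx
    rw [mul_smul, ← hc, smul_comm]
    exact Submodule.smul_mem _ _ hrm
  by_cases hcase : ∃ b ∈ J, SetLike.IsHomogeneousElem 𝒜 b ∧ s * b ∉ N.colon ⊤
  · obtain ⟨b, hbJ, hbh, hbns⟩ := hcase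
    left
    rcases h.2 r b hr hbh (hrb b hbJ) with h1 | h2
    · exact h1
    · exact absurd h2 hbns
  · push_neg at hcase
    right
    -- s * a ∈ N.colon ⊤ for all a ∈ J
    have hsJ : ∀ a ∈ J, s * a ∈ N.colon ⊤ := by
      intro a ha
      have := DirectSum.sum_support_decompose 𝒜 a
      rw [← this, Finset.mul_sum]
      refine Submodule.sum_mem _ fun i _ => ?_
      have hi : (DirectSum.decompose 𝒜 a i : R) ∈ J := colon_graded 𝒜 ℳ hKgr ha i
      exact hcase _ hi ⟨i, (DirectSum.decompose 𝒜 a i).2⟩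
    -- m ∈ K = J • ⊤
    have hmK : m ∈ J • (⊤ : Submodule R M) := by
      rw [← hmult K hKgr]
      exact Submodule.mem_span_singleton_self m
    -- conclude s • m ∈ N
    refine Submodule.smul_induction_on hmK ?_ ?_
    · intro a ha x _
      rw [smul_comm, ← smul_assoc, smul_eq_mul, mul_comm a s]
      exact Submodule.mem_colon.mp (hsJ a ha) x trivial
    · intro x y hx hy
      rw [smul_add]; exact N.add_mem hx hy

/-- in a graded multiplication module, if `(N :_R M)` is a graded `s`-prime
ideal, then `N` is a graded `s`-prime submodule. -/
theorem stmt_3 [AddGroup G] [DecidableEq G] [CommRing R] [AddCommGroup M] [Module R M]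
    (𝒜 : G → AddSubgroup R) (ℳ : G → AddSubgroup M)
    [GradedRing 𝒜] [DirectSum.Decomposition ℳ] [SetLike.GradedSMul 𝒜 ℳ]
    (hmult : ∀ K : Submodule R M, IsGradedSubmodule ℳ K → K = K.colon ⊤ • (⊤ : Submodule R M))
    (N : Submodule R M) (hN : IsGradedSubmodule ℳ N)
    (s : R) (hs0 : s ≠ 0) (hsh : SetLike.IsHomogeneousElem 𝒜 s)
    (h : IsGradedSPrimeIdeal 𝒜 s (N.colon ⊤)) :
    IsGradedSPrime 𝒜 ℳ s N :=
  stmt_3' 𝒜 ℳ hmult N hN s hs0 hsh h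
end

section
/- Let M be a finitely generated graded R-module and s a nonzero homogeneous element such that every proper graded submodule of M is graded s-prime. If t is a homogeneous element of R that is not a homogeneous zero divisor of M, then tM = M. -/
open DirectSum

variable {G R M : Type*}

set_option linter.unusedSectionVars false

section aux
variable [AddGroup G] [DecidableEq G] [CommRing R] [AddCommGroup M] [Module R M]
  (𝒜 : G → AddSubgroup R) (ℳ : G → AddSubgroup M)
  [GradedRing 𝒜] [DirectSum.Decomposition ℳ] [SetLike.GradedSMul 𝒜 ℳ]

lemma decompose_smul_of_mem {t : R} {g : G} (ht : t ∈ 𝒜 g) (j : G) :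
    ∀ y : M, (DirectSum.decompose ℳ (t • y) (g + j) : M)
      = t • (DirectSum.decompose ℳ y j : M) := by
  refine DirectSum.Decomposition.inductionOn ℳ ?_ ?_ ?_
  · simp
  · rintro i ⟨m, hm⟩
    have hmem : t • m ∈ ℳ (g + i) := SetLike.GradedSMul.smul_mem ht hm
    by_cases hij : i = j
    · subst hij
      rw [DirectSum.decompose_of_mem_same ℳ hm,
        DirectSum.decompose_of_mem_same ℳ hmem]
    · rw [DirectSum.decompose_of_mem_ne ℳ hm hij,
        DirectSum.decompose_of_mem_ne ℳ hmem (by simpa using hij), smul_zero]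
  · intro x y hx hy
    rw [smul_add, DirectSum.decompose_add, DirectSum.decompose_add]
    push_cast [DirectSum.add_apply]
    rw [hx, hy, smul_add]

end aux

section main
variable [AddGroup G] [DecidableEq G] [CommRing R] [AddCommGroup M] [Module R M]
  (𝒜 : G → AddSubgroup R) (ℳ : G → AddSubgroup M)
  [GradedRing 𝒜] [DirectSum.Decomposition ℳ] [SetLike.GradedSMul 𝒜 ℳ]

-- t is a genuine non-zero-divisor
lemma nzd {t : R} {g : G} (ht : t ∈ 𝒜 g)
    (htz : ¬ ∃ m : M, m ≠ 0 ∧ SetLike.IsHomogeneousElem ℳ m ∧ t • m = 0) :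
    ∀ m : M, t • m = 0 → m = 0 := by
  push_neg at htz
  intro m hm
  classical
  have hcomp : ∀ j : G, (DirectSum.decompose ℳ m j : M) = 0 := by
    intro j
    have h1 : (DirectSum.decompose ℳ (t • m) (g + j) : M)
        = t • (DirectSum.decompose ℳ m j : M) := decompose_smul_of_mem 𝒜 ℳ ht j m
    rw [hm] at h1
    simp at h1
    by_contra hne
    exact htz _ hne ⟨j, (DirectSum.decompose ℳ m j).2⟩ h1.symm
  calc m = ∑ j ∈ (DirectSum.decompose ℳ m).support, (DirectSum.decompose ℳ m j : M) :=
        (DirectSum.sum_support_decompose ℳ m).symm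
    _ = 0 := Finset.sum_eq_zero fun j _ => hcomp j

lemma graded_range {t : R} {g : G} (ht : t ∈ 𝒜 g) :
    ∀ m ∈ LinearMap.range (t • (LinearMap.id : M →ₗ[R] M)), ∀ g' : G,
      (DirectSum.decompose ℳ m g' : M) ∈ LinearMap.range (t • (LinearMap.id : M →ₗ[R] M)) := by
  rintro m ⟨y, rfl⟩ g'
  refine ⟨DirectSum.decompose ℳ y (-g + g'), ?_⟩
  have := decompose_smul_of_mem 𝒜 ℳ ht (-g + g') y
  rw [add_neg_cancel_left] at this
  simp only [LinearMap.smul_apply, LinearMap.id_apply]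
  exact this.symm
end main

/-- if `M` is finitely generated and every proper graded submodule is graded
`s`-prime, then every homogeneous non-zero-divisor `t` of `M` satisfies `tM = M`. -/
theorem stmt_6 [AddGroup G] [DecidableEq G] [CommRing R] [AddCommGroup M] [Module R M]
    (𝒜 : G → AddSubgroup R) (ℳ : G → AddSubgroup M)
    [GradedRing 𝒜] [DirectSum.Decomposition ℳ] [SetLike.GradedSMul 𝒜 ℳ]
    [Module.Finite R M]
    (s : R) (hs0 : s ≠ 0) (hsh : SetLike.IsHomogeneousElem 𝒜 s)
    (h : ∀ N : Submodule R M, IsGradedSubmodule ℳ N → N ≠ ⊤ → IsGradedSPrime 𝒜 ℳ s N)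
    (t : R) (hth : SetLike.IsHomogeneousElem 𝒜 t)
    (htz : ¬ ∃ m : M, m ≠ 0 ∧ SetLike.IsHomogeneousElem ℳ m ∧ t • m = 0) :
    ∀ m : M, ∃ x : M, t • x = m := by
  classical
  obtain ⟨g, htg⟩ := hth
  set N : Submodule R M := LinearMap.range (t • (LinearMap.id : M →ₗ[R] M)) with hNdef
  set N2 : Submodule R M := LinearMap.range ((t * t) • (LinearMap.id : M →ₗ[R] M)) with hN2def
  have hnzd := nzd 𝒜 ℳ htg htz
  have htt : t * t ∈ 𝒜 (g + g) := SetLike.mul_mem_graded htg htg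
  suffices hN : N = ⊤ by
    intro m
    have hm : m ∈ N := hN ▸ Submodule.mem_top
    obtain ⟨x, hx⟩ := hm
    exact ⟨x, by simpa using hx⟩
  by_contra hN
  have hN2N : N2 ≤ N := by
    rintro x ⟨y, rfl⟩
    exact ⟨t • y, by simp [mul_smul]⟩
  have hN2top : N2 ≠ ⊤ := fun he => hN (top_le_iff.mp (he ▸ hN2N))
  have hs1 := (h N (graded_range 𝒜 ℳ htg) hN).1
  have hs2 := (h N2 (graded_range 𝒜 ℳ htt) hN2top).2
  apply hs1
  rw [Submodule.mem_colon]
  intro p _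
  rw [← DirectSum.sum_support_decompose ℳ p, Finset.smul_sum]
  refine Submodule.sum_mem _ fun j _ => ?_
  set c : M := (DirectSum.decompose ℳ p j : M) with hc
  have htcH : SetLike.IsHomogeneousElem ℳ (t • c) :=
    ⟨g + j, SetLike.GradedSMul.smul_mem htg (DirectSum.decompose ℳ p j).2⟩
  have hmem : t • (t • c) ∈ N2 := ⟨c, by simp [mul_smul]⟩
  have key : ∀ y : M, (t * t) • y = t • (s • c) → s • c ∈ N := by
    intro y hy
    have h0 : t • (t • y - s • c) = 0 := by
      rw [smul_sub, ← mul_smul, hy, ← mul_smul]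
      ring_nf
      exact sub_self _
    have := sub_eq_zero.mp (hnzd _ h0)
    exact ⟨y, by simpa using this⟩
  rcases hs2 t (t • c) ⟨g, htg⟩ htcH hmem with hsc | hsc
  · have := Submodule.mem_colon.mp hsc c (by simp)
    obtain ⟨y, hy⟩ := this
    refine key y ?_
    simpa [mul_smul, mul_comm s t] using hy
  · obtain ⟨y, hy⟩ := hsc
    refine key y ?_
    have : s • (t • c) = t • (s • c) := smul_comm s t c
    simpa [this] using hy
end

section
/- Let M be a finitely generated graded multiplication R-module and s a nonzero homogeneous element of R. If every proper graded submodule of M is graded s-prime, then M is a graded simple R-module. -/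
open DirectSum

variable {G R M : Type*}

set_option linter.unusedSectionVars false

section Aux

variable [AddGroup G] [DecidableEq G] [CommRing R] [AddCommGroup M] [Module R M]
variable (𝒜 : G → AddSubgroup R) (ℳ : G → AddSubgroup M)
variable [GradedRing 𝒜] [DirectSum.Decomposition ℳ] [SetLike.GradedSMul 𝒜 ℳ]

theorem aux_gsmul {i j : G} {r : R} {m : M} (hr : r ∈ 𝒜 i) (hm : m ∈ ℳ j) :
    r • m ∈ ℳ (i + j) :=
  SetLike.GradedSMul.smul_mem hr hm

/-- L2: component of `c • m` for homogeneous `c`. -/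
theorem aux_L2 {c : R} {g : G} (hc : c ∈ 𝒜 g) (m : M) (i : G) :
    (DirectSum.decompose ℳ (c • m) (g + i) : M) = c • (DirectSum.decompose ℳ m i : M) := by
  induction m using DirectSum.Decomposition.inductionOn ℳ with
  | zero => simp
  | @homogeneous j x =>
    obtain ⟨x, hx⟩ := x
    by_cases hij : j = i
    · subst hij
      rw [DirectSum.decompose_of_mem_same ℳ (aux_gsmul 𝒜 ℳ hc hx),
        DirectSum.decompose_of_mem_same ℳ hx]
    · rw [DirectSum.decompose_of_mem_ne ℳ (aux_gsmul 𝒜 ℳ hc hx)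
        (fun e => hij (by exact add_left_cancel e)),
        DirectSum.decompose_of_mem_ne ℳ hx hij, smul_zero]
  | add x y ihx ihy =>
    rw [smul_add, DirectSum.decompose_add, DirectSum.decompose_add, DirectSum.add_apply,
      DirectSum.add_apply, AddSubgroup.coe_add, AddSubgroup.coe_add, ihx, ihy, smul_add]

/-- L1: component of `b • m` in the other variable, for homogeneous `m`. -/
theorem aux_L1 {m : M} {i : G} (hm : m ∈ ℳ i) (b : R) (g : G) :
    (DirectSum.decompose ℳ (b • m) (g + i) : M) = (DirectSum.decompose 𝒜 b g : R) • m := by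
  induction b using DirectSum.Decomposition.inductionOn 𝒜 with
  | zero => simp
  | @homogeneous j x =>
    obtain ⟨x, hx⟩ := x
    by_cases hij : j = g
    · subst hij
      rw [DirectSum.decompose_of_mem_same ℳ (aux_gsmul 𝒜 ℳ hx hm),
        DirectSum.decompose_of_mem_same 𝒜 hx]
    · rw [DirectSum.decompose_of_mem_ne ℳ (aux_gsmul 𝒜 ℳ hx hm)
        (fun e => hij (by exact add_right_cancel e)),
        DirectSum.decompose_of_mem_ne 𝒜 hx hij, zero_smul]
  | add x y ihx ihy =>
    rw [add_smul, DirectSum.decompose_add, DirectSum.decompose_add, DirectSum.add_apply,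
      DirectSum.add_apply, AddSubgroup.coe_add, AddSubgroup.coe_add, ihx, ihy, add_smul]

/-- reduce `∀ m, c • m ∈ K` to homogeneous `m`. -/
theorem aux_smul_mem (K : Submodule R M) (c : R)
    (hc : ∀ (i : G) (m : M), m ∈ ℳ i → c • m ∈ K) : ∀ m : M, c • m ∈ K := by
  intro m
  classical
  have e : c • m = ∑ i ∈ (DirectSum.decompose ℳ m).support, c • (DirectSum.decompose ℳ m i : M) := by
    conv_lhs => rw [← DirectSum.sum_support_decompose ℳ m]
    rw [Finset.smul_sum]
  rw [e]
  exact Submodule.sum_mem _ fun i _ => hc i _ (SetLike.coe_mem _)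

theorem aux_bot : IsGradedSubmodule ℳ (⊥ : Submodule R M) := by
  intro m hm g
  rw [Submodule.mem_bot] at hm
  subst hm
  simp

theorem aux_range {c : R} {g : G} (hc : c ∈ 𝒜 g) :
    IsGradedSubmodule ℳ (LinearMap.range (LinearMap.lsmul R M c)) := by
  rintro m ⟨x, rfl⟩ i
  rw [LinearMap.lsmul_apply]
  rw [show i = g + (-g + i) from (add_neg_cancel_left _ _).symm, aux_L2 𝒜 ℳ hc]
  exact ⟨_, rfl⟩

theorem aux_ker {c : R} {g : G} (hc : c ∈ 𝒜 g) :
    IsGradedSubmodule ℳ (LinearMap.ker (LinearMap.lsmul R M c)) := by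
  intro m hm i
  rw [LinearMap.mem_ker, LinearMap.lsmul_apply] at hm ⊢
  rw [← aux_L2 𝒜 ℳ hc, hm]
  simp

theorem aux_sup {K₁ K₂ : Submodule R M} (h₁ : IsGradedSubmodule ℳ K₁)
    (h₂ : IsGradedSubmodule ℳ K₂) : IsGradedSubmodule ℳ (K₁ ⊔ K₂) := by
  intro m hm g
  obtain ⟨y, hy, z, hz, rfl⟩ := Submodule.mem_sup.mp hm
  rw [DirectSum.decompose_add, DirectSum.add_apply, AddSubgroup.coe_add]
  exact Submodule.add_mem _ (Submodule.mem_sup_left (h₁ y hy g))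
    (Submodule.mem_sup_right (h₂ z hz g))

theorem aux_colon {N : Submodule R M} (hN : IsGradedSubmodule ℳ N) {b : R}
    (hb : b ∈ N.colon ⊤) (g : G) : (DirectSum.decompose 𝒜 b g : R) ∈ N.colon ⊤ := by
  rw [Submodule.mem_colon]
  intro m _
  apply aux_smul_mem ℳ N _ (fun i m hm => ?_) m
  rw [← aux_L1 𝒜 ℳ hm b g]
  exact hN _ (Submodule.mem_colon.mp hb m (Set.mem_univ m)) _

end Aux

section Aux2

variable [AddGroup G] [DecidableEq G] [CommRing R] [AddCommGroup M] [Module R M]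
variable (𝒜 : G → AddSubgroup R) (ℳ : G → AddSubgroup M)
variable [GradedRing 𝒜] [DirectSum.Decomposition ℳ] [SetLike.GradedSMul 𝒜 ℳ]
variable {s : R}
variable (h : ∀ N : Submodule R M, IsGradedSubmodule ℳ N → N ≠ ⊤ → IsGradedSPrime 𝒜 ℳ s N)
variable (hsh : SetLike.IsHomogeneousElem 𝒜 s)

include h hsh

/-- Lemma A: no power of `s` maps `M` into a proper graded submodule. -/
theorem aux_A : ∀ (j : ℕ) (K : Submodule R M), IsGradedSubmodule ℳ K → K ≠ ⊤ →
    (∀ m : M, s ^ j • m ∈ K) → False := by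
  intro j
  induction j with
  | zero =>
    intro K _ hKt hj
    exact hKt (Submodule.eq_top_iff'.mpr fun m => by simpa using hj m)
  | succ j ih =>
    intro K hKg hKt hj
    obtain ⟨ds, hs⟩ := hsh
    by_cases htop : LinearMap.range (LinearMap.lsmul R M (s ^ j)) ⊔ K = ⊤
    · apply (h K hKg hKt).1
      rw [Submodule.mem_colon]
      intro m _
      have hm : m ∈ LinearMap.range (LinearMap.lsmul R M (s ^ j)) ⊔ K :=
        htop ▸ Submodule.mem_top
      obtain ⟨y, hy, z, hz, rfl⟩ := Submodule.mem_sup.mp hm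
      obtain ⟨x, rfl⟩ := hy
      rw [smul_add]
      refine Submodule.add_mem _ ?_ (Submodule.smul_mem _ _ hz)
      rw [LinearMap.lsmul_apply, ← mul_smul, ← pow_succ']
      exact hj x
    · refine ih _ (aux_sup ℳ (aux_range 𝒜 ℳ (SetLike.pow_mem_graded j hs)) hKg) htop
        (fun m => Submodule.mem_sup_left ⟨m, rfl⟩)

/-- Lemma X: a homogeneous `b` not annihilating `M` with `s * b` annihilating `M` is absurd. -/
theorem aux_X {b : R} {g : G} (hb : b ∈ 𝒜 g) (hbM : ∃ m : M, b • m ≠ 0)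
    (hz : ∀ m : M, (s * b) • m = 0) : False := by
  obtain ⟨m₀, hm₀⟩ := hbM
  have hUt : LinearMap.ker (LinearMap.lsmul R M b) ≠ ⊤ := by
    intro e
    apply hm₀
    have : m₀ ∈ LinearMap.ker (LinearMap.lsmul R M b) := e ▸ Submodule.mem_top
    simpa using this
  apply (h _ (aux_ker 𝒜 ℳ hb) hUt).1
  rw [Submodule.mem_colon]
  intro m _
  rw [LinearMap.mem_ker, LinearMap.lsmul_apply, ← mul_smul, mul_comm]
  exact hz m

/-- Lemma Z: a homogeneous `b` not annihilating `M` is not nilpotent on `M`. -/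
theorem aux_Z {b : R} {g : G} (hb : b ∈ 𝒜 g) (hbM : ∃ m : M, b • m ≠ 0) :
    ∀ j : ℕ, (∀ m : M, b ^ j • m = 0) → False := by
  intro j
  induction j with
  | zero =>
    obtain ⟨m, hm⟩ := hbM
    intro hz
    exact hm (by simpa using hz (b • m))
  | succ j ih =>
    intro hz
    by_cases hj : ∀ m : M, b ^ j • m = 0
    · exact ih hj
    push_neg at hj
    obtain ⟨m₀, hm₀⟩ := hj
    have hbot_ne : (⊥ : Submodule R M) ≠ ⊤ := by
      intro e
      exact hm₀ (by simpa using (e ▸ Submodule.mem_top : b ^ j • m₀ ∈ (⊥ : Submodule R M)))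
    have hsp := h ⊥ (aux_bot ℳ) hbot_ne
    by_cases hsb : s * b ∈ (⊥ : Submodule R M).colon ⊤
    · exact aux_X 𝒜 ℳ h hsh hb hbM
        (fun m => by simpa using Submodule.mem_colon.mp hsb m (Set.mem_univ m))
    · refine aux_X 𝒜 ℳ h hsh (SetLike.pow_mem_graded j hb) ⟨m₀, hm₀⟩ ?_
      have key : ∀ m : M, (s * b ^ j) • m ∈ (⊥ : Submodule R M) := by
        apply aux_smul_mem ℳ
        intro i m hm
        have hd := hsp.2 b (b ^ j • m) ⟨g, hb⟩ ⟨_, aux_gsmul 𝒜 ℳ (SetLike.pow_mem_graded j hb) hm⟩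
          (by rw [Submodule.mem_bot, ← mul_smul, ← pow_succ']; exact hz m)
        rcases hd with h1 | h2
        · exact absurd h1 hsb
        · rwa [mul_smul]
      exact fun m => by simpa using key m
end Aux2


/-- a finitely generated graded multiplication module in which every proper
graded submodule is graded `s`-prime is graded simple. -/
theorem stmt_7 [AddGroup G] [DecidableEq G] [CommRing R] [AddCommGroup M] [Module R M]
    (𝒜 : G → AddSubgroup R) (ℳ : G → AddSubgroup M)
    [GradedRing 𝒜] [DirectSum.Decomposition ℳ] [SetLike.GradedSMul 𝒜 ℳ]
    [Module.Finite R M]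
    (hmult : ∀ K : Submodule R M, IsGradedSubmodule ℳ K → K = K.colon ⊤ • (⊤ : Submodule R M))
    (s : R) (hs0 : s ≠ 0) (hsh : SetLike.IsHomogeneousElem 𝒜 s)
    (h : ∀ N : Submodule R M, IsGradedSubmodule ℳ N → N ≠ ⊤ → IsGradedSPrime 𝒜 ℳ s N) :
    ∀ N : Submodule R M, IsGradedSubmodule ℳ N → N = ⊥ ∨ N = ⊤ := by
  intro N hNg
  by_cases hNt : N = ⊤
  · exact Or.inr hNt
  left
  by_contra hNb
  -- find a homogeneous element of the colon ideal that does not annihilate M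
  have ha : ∃ (g : G) (a : R), a ∈ 𝒜 g ∧ a ∈ N.colon ⊤ ∧ ∃ m : M, a • m ≠ 0 := by
    by_contra hcon
    push_neg at hcon
    apply hNb
    rw [eq_bot_iff]
    intro n hn
    rw [hmult N hNg] at hn
    classical
    refine Submodule.smul_induction_on hn ?_ ?_
    · intro r hr x _
      have e : r • x = ∑ g ∈ (DirectSum.decompose 𝒜 r).support,
          (DirectSum.decompose 𝒜 r g : R) • x := by
        conv_lhs => rw [← DirectSum.sum_support_decompose 𝒜 r]
        rw [Finset.sum_smul]
      rw [e]
      refine Submodule.sum_mem _ fun g _ => ?_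
      rw [hcon g _ (SetLike.coe_mem _) (aux_colon 𝒜 ℳ hNg hr g)]
      exact Submodule.zero_mem _
    · intro x y hx hy
      exact Submodule.add_mem _ hx hy
  obtain ⟨ga, a, ha𝒜, haI, haM⟩ := ha
  have haN : ∀ m : M, a • m ∈ N := fun m => Submodule.mem_colon.mp haI m (Set.mem_univ m)
  -- step 1 : s • a • m ∈ a² M for all m
  set K₂ := LinearMap.range (LinearMap.lsmul R M (a * a)) with hK₂def
  have hK₂N : K₂ ≤ N := by
    rintro x ⟨y, rfl⟩
    rw [LinearMap.lsmul_apply, mul_smul]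
    exact haN _
  have hK₂t : K₂ ≠ ⊤ := fun e => hNt (top_le_iff.mp (e ▸ hK₂N))
  have hK₂g : IsGradedSubmodule ℳ K₂ := aux_range 𝒜 ℳ (SetLike.mul_mem_graded ha𝒜 ha𝒜)
  have hK₂sp := h K₂ hK₂g hK₂t
  have claim1 : ∀ m : M, (s * a) • m ∈ K₂ := by
    by_cases hsa : s * a ∈ K₂.colon ⊤
    · exact fun m => Submodule.mem_colon.mp hsa m (Set.mem_univ m)
    · apply aux_smul_mem ℳ
      intro i m hm
      have hd := hK₂sp.2 a (a • m) ⟨ga, ha𝒜⟩ ⟨_, aux_gsmul 𝒜 ℳ ha𝒜 hm⟩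
        (⟨m, by rw [LinearMap.lsmul_apply, mul_smul]⟩)
      rcases hd with h1 | h2
      · exact absurd h1 hsa
      · rwa [mul_smul]
  -- Cayley-Hamilton
  obtain ⟨p, hmonic, -, hcoeff, haev⟩ :=
    LinearMap.exists_monic_and_coeff_mem_pow_and_aeval_eq_zero_of_range_le_smul R
      (algebraMap R (Module.End R M) (s * a)) (Ideal.span {a * a})
      (by
        rintro x ⟨y, rfl⟩
        rw [Module.algebraMap_end_apply]
        obtain ⟨z, hz⟩ := claim1 y
        rw [LinearMap.lsmul_apply] at hz
        rw [← hz]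
        exact Submodule.smul_mem_smul (Ideal.subset_span (Set.mem_singleton _))
          Submodule.mem_top)
  set u := p.eval (s * a) with hudef
  have hu : ∀ m : M, u • m = 0 := by
    have e0 : algebraMap R (Module.End R M) u = 0 := by
      rw [hudef, ← Polynomial.aeval_algebraMap_apply_eq_algebraMap_eval, haev]
    intro m
    have := DFunLike.congr_fun e0 m
    simpa [Module.algebraMap_end_apply] using this
  set n := p.natDegree with hndef
  have hn : n ≠ 0 := by
    intro e
    have hp1 : p = 1 := (Polynomial.Monic.natDegree_eq_zero hmonic).mp e
    obtain ⟨m, hm⟩ := haM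
    exact hm (by simpa [hudef, hp1] using hu (a • m))
  -- write u = sⁿ aⁿ + a^(n+1) w
  have hw : ∃ w : R, u = s ^ n * a ^ n + a ^ (n + 1) * w := by
    have hrest : (∑ k ∈ Finset.range n, p.coeff k * (s * a) ^ k) ∈ Ideal.span {a ^ (n + 1)} := by
      refine Ideal.sum_mem _ fun k hk => ?_
      rw [Finset.mem_range] at hk
      rw [Ideal.mem_span_singleton]
      have h1 : (a * a) ^ (n - k) ∣ p.coeff k := by
        rw [← Ideal.mem_span_singleton, ← Ideal.span_singleton_pow]
        exact hcoeff k
      have h2 : a ^ (n + 1) ∣ (a * a) ^ (n - k) * a ^ k := by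
        rw [← pow_two, ← pow_mul, ← pow_add]
        exact pow_dvd_pow a (by omega)
      calc a ^ (n + 1) ∣ (a * a) ^ (n - k) * a ^ k := h2
        _ ∣ (p.coeff k * s ^ k) * a ^ k :=
            mul_dvd_mul (h1.mul_right _) dvd_rfl
        _ = p.coeff k * (s * a) ^ k := by rw [mul_pow]; ring
    obtain ⟨w, hw'⟩ := Ideal.mem_span_singleton.mp hrest
    refine ⟨w, ?_⟩
    rw [hudef, Polynomial.eval_eq_sum_range, ← hndef, Finset.sum_range_succ, hw',
      hmonic.coeff_natDegree, one_mul, mul_pow]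
    ring
  obtain ⟨w, hw⟩ := hw
  -- if aⁿ annihilates M we are done by Lemma Z
  by_cases han : ∀ m : M, a ^ n • m = 0
  · exact aux_Z 𝒜 ℳ h hsh ha𝒜 haM n han
  push_neg at han
  obtain ⟨m₁, hm₁⟩ := han
  have hbot_ne : (⊥ : Submodule R M) ≠ ⊤ := by
    intro e
    exact hm₁ (by simpa using (e ▸ Submodule.mem_top : a ^ n • m₁ ∈ (⊥ : Submodule R M)))
  have hbsp := h ⊥ (aux_bot ℳ) hbot_ne
  obtain ⟨ds, hs⟩ := hsh
  by_cases hsan : s * a ^ n ∈ (⊥ : Submodule R M).colon ⊤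
  · exact aux_X 𝒜 ℳ h ⟨ds, hs⟩ (SetLike.pow_mem_graded n ha𝒜) ⟨m₁, hm₁⟩
      (fun m => by simpa using Submodule.mem_colon.mp hsan m (Set.mem_univ m))
  -- final contradiction via Lemma A at the exponent n+1
  refine aux_A 𝒜 ℳ h ⟨ds, hs⟩ (n + 1) N hNg hNt ?_
  apply aux_smul_mem ℳ
  intro i m hm
  set x' : M := (DirectSum.decompose ℳ (w • m) (-ga + (n • ds + i)) : M) with hx'
  have hx'mem : x' ∈ ℳ (-ga + (n • ds + i)) := SetLike.coe_mem _
  have hz1 : s ^ n • m ∈ ℳ (n • ds + i) := aux_gsmul 𝒜 ℳ (SetLike.pow_mem_graded n hs) hm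
  have hz2 : a • x' ∈ ℳ (n • ds + i) := by
    have := aux_gsmul 𝒜 ℳ ha𝒜 hx'mem
    rwa [add_neg_cancel_left] at this
  have hz'mem : s ^ n • m + a • x' ∈ ℳ (n • ds + i) := add_mem hz1 hz2
  -- z := sⁿ•m + (a*w)•m lies in ker(aⁿ•)
  have hz : s ^ n • m + (a * w) • m ∈ LinearMap.ker (LinearMap.lsmul R M (a ^ n)) := by
    rw [LinearMap.mem_ker, LinearMap.lsmul_apply, smul_add, ← mul_smul, ← mul_smul, ← add_smul]
    rw [show a ^ n * s ^ n + a ^ n * (a * w) = u by rw [hw, pow_succ']; ring]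
    exact hu m
  -- its component of degree n•ds + i is z' = sⁿ•m + a•x'
  have hz'U : s ^ n • m + a • x' ∈ LinearMap.ker (LinearMap.lsmul R M (a ^ n)) := by
    have hcomp := aux_ker 𝒜 ℳ (SetLike.pow_mem_graded n ha𝒜) _ hz (n • ds + i)
    have hdec : (DirectSum.decompose ℳ (s ^ n • m + (a * w) • m) (n • ds + i) : M)
        = s ^ n • m + a • x' := by
      rw [DirectSum.decompose_add, DirectSum.add_apply, AddSubgroup.coe_add,
        DirectSum.decompose_of_mem_same ℳ hz1]
      congr 1
      conv_lhs => rw [mul_smul, show n • ds + i = ga + (-ga + (n • ds + i)) from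
        (add_neg_cancel_left _ _).symm]
      rw [aux_L2 𝒜 ℳ ha𝒜]
    rwa [hdec] at hcomp
  -- pair (aⁿ, z') in the s-prime submodule ⊥
  have hd := hbsp.2 (a ^ n) (s ^ n • m + a • x') ⟨_, SetLike.pow_mem_graded n ha𝒜⟩
    ⟨_, hz'mem⟩
    (by
      rw [Submodule.mem_bot]
      have := hz'U
      rwa [LinearMap.mem_ker, LinearMap.lsmul_apply] at this)
  rcases hd with h1 | h2
  · exact absurd h1 hsan
  · rw [Submodule.mem_bot, smul_add] at h2
    have e1 : s ^ (n + 1) • m = a • (-(s • x')) := by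
      rw [pow_succ', mul_smul, eq_neg_of_add_eq_zero_left h2, smul_comm s a x', ← smul_neg]
    rw [e1]
    exact haN _
end

section
/- Let R be a G-graded commutative ring and s a nonzero homogeneous element. If every proper graded ideal of R is graded s-prime, then R is a graded field, i.e., every nonzero homogeneous element of R is a unit. -/
open DirectSum

variable {G R M : Type*}

/-- if every proper graded ideal of `R` is graded `s`-prime, then `R` is a
graded field: every nonzero homogeneous element is a unit. -/
theorem stmt_8 [AddGroup G] [DecidableEq G] [CommRing R] [Nontrivial R]
    (𝒜 : G → AddSubgroup R) [GradedRing 𝒜]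
    (s : R) (hs0 : s ≠ 0) (hsh : SetLike.IsHomogeneousElem 𝒜 s)
    (h : ∀ P : Ideal R, IsGradedIdeal 𝒜 P → P ≠ ⊤ → IsGradedSPrimeIdeal 𝒜 s P) :
    ∀ x : R, x ≠ 0 → SetLike.IsHomogeneousElem 𝒜 x → IsUnit x := by
  -- key: s * z ≠ 0 for every nonzero homogeneous z
  have key : ∀ z : R, z ≠ 0 → SetLike.IsHomogeneousElem 𝒜 z → s * z ≠ 0 := by
    rintro z hz ⟨d, hzd⟩ hsz
    set A : Ideal R :=
      { carrier := {r | r * z = 0}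
        add_mem' := fun {a b} ha hb => by
          simp only [Set.mem_setOf_eq] at *; rw [add_mul, ha, hb, add_zero]
        zero_mem' := by simp
        smul_mem' := fun c r hr => by
          simp only [Set.mem_setOf_eq, smul_eq_mul] at *; rw [mul_assoc, hr, mul_zero] } with hA
    have hAg : IsGradedIdeal 𝒜 A := by
      intro r hr g
      have : (decompose 𝒜 (r * z) (g + d) : R) = decompose 𝒜 r g * z :=
        DirectSum.coe_decompose_mul_add_of_right_mem 𝒜 hzd
      have hrz : r * z = 0 := hr
      show (decompose 𝒜 r g : R) * z = 0
      rw [← this, hrz, decompose_zero]; rfl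
    have hAne : A ≠ ⊤ := by
      intro ht
      have : (1 : R) ∈ A := ht ▸ Submodule.mem_top
      have h1 : (1:R) * z = 0 := this
      exact hz (by simpa using h1)
    exact (h A hAg hAne).1 hsz
  intro x hx0 hxh
  obtain ⟨b, hxb⟩ := hxh
  obtain ⟨a, hsa⟩ := hsh
  by_contra hxu
  have hsx : Ideal.span {x} ≠ ⊤ := by
    intro ht
    have : x ∣ 1 := Ideal.mem_span_singleton.mp (ht ▸ Submodule.mem_top)
    exact hxu (isUnit_of_dvd_one this)
  have hsx2 : Ideal.span {x * x} ≠ ⊤ := by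
    intro ht
    have : x * x ∣ 1 := Ideal.mem_span_singleton.mp (ht ▸ Submodule.mem_top)
    exact hxu (isUnit_of_mul_isUnit_left (isUnit_of_dvd_one this))
  have hgr : ∀ y : R, SetLike.IsHomogeneousElem 𝒜 y → IsGradedIdeal 𝒜 (Ideal.span {y}) := by
    intro y hy r hr g
    exact Ideal.homogeneous_span 𝒜 {y} (by simpa using hy) g hr
  -- apply s-primality of span {x*x}
  obtain ⟨c, hc⟩ : x * x ∣ s * x := by
    rcases (h _ (hgr _ (SetLike.IsHomogeneousElem.mul ⟨b, hxb⟩ ⟨b, hxb⟩)) hsx2).2 x x ⟨b, hxb⟩ ⟨b, hxb⟩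
      (Ideal.mem_span_singleton_self _) with h' | h' <;>
      exact Ideal.mem_span_singleton.mp h'
  set t : R := (decompose 𝒜 c (a - b) : R) with ht
  have hteq : s * x = t * (x * x) := by
    have h1 : s * x ∈ 𝒜 (a + b) := SetLike.mul_mem_graded hsa hxb
    have h2 : (decompose 𝒜 (c * (x * x)) ((a - b) + (b + b)) : R)
        = decompose 𝒜 c (a - b) * (x * x) :=
      DirectSum.coe_decompose_mul_add_of_right_mem 𝒜 (SetLike.mul_mem_graded hxb hxb)
    have h3 : c * (x * x) = s * x := by rw [hc]; ring
    have h4 : (a - b) + (b + b) = a + b := by rw [← add_assoc, sub_add_cancel]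
    rw [ht, ← h2, h4, h3, decompose_of_mem_same 𝒜 h1]
  have hth : t ∈ 𝒜 (a - b) := SetLike.coe_mem _
  have htx : t * x ∈ 𝒜 a := by
    have := SetLike.mul_mem_graded hth hxb
    rwa [sub_add_cancel] at this
  have hy : s - t * x ∈ 𝒜 a := sub_mem hsa htx
  have hxy : x * (s - t * x) = 0 := by
    have : x * (s - t * x) = s * x - t * (x * x) := by ring
    rw [this, hteq, sub_self]
  by_cases hy0 : s - t * x = 0
  · -- s = t * x ∈ span {x}, contradicting s ∉ span {x}
    have : s ∈ Ideal.span {x} :=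
      Ideal.mem_span_singleton.mpr ⟨t, by linear_combination hy0⟩
    exact (h _ (hgr _ ⟨b, hxb⟩) hsx).1 this
  · -- zero ideal is graded s-prime
    have hbot : IsGradedIdeal 𝒜 (⊥ : Ideal R) := by
      intro r hr g
      simp only [Ideal.mem_bot] at *
      rw [hr, decompose_zero]; rfl
    rcases (h ⊥ hbot bot_ne_top).2 x (s - t * x) ⟨b, hxb⟩ ⟨a, hy⟩ (by simpa using hxy)
      with h' | h'
    · exact key x hx0 ⟨b, hxb⟩ (by simpa using h')
    · exact key _ hy0 ⟨a, hy⟩ (by simpa using h')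
end

section
/- Let f : M → T be a graded R-homomorphism of graded R-modules, s a nonzero homogeneous element of R, and K a graded s-prime submodule of T with s ∉ (f⁻¹(K) :_R M). Then f⁻¹(K) is a graded s-prime submodule of M. -/
open DirectSum

variable {G R M : Type*}

/-- preimage of a graded `s`-prime submodule under a graded homomorphism is
graded `s`-prime, provided `s ∉ (f⁻¹(K) :_R M)`. -/
theorem stmt_9 {T : Type*} [AddGroup G] [DecidableEq G] [CommRing R]
    [AddCommGroup M] [Module R M] [AddCommGroup T] [Module R T]
    (𝒜 : G → AddSubgroup R) (ℳ : G → AddSubgroup M) (𝒯 : G → AddSubgroup T)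
    [GradedRing 𝒜] [DirectSum.Decomposition ℳ] [SetLike.GradedSMul 𝒜 ℳ]
    [DirectSum.Decomposition 𝒯] [SetLike.GradedSMul 𝒜 𝒯]
    (f : M →ₗ[R] T) (hf : ∀ g : G, ∀ m ∈ ℳ g, f m ∈ 𝒯 g)
    (s : R) (hs0 : s ≠ 0) (hsh : SetLike.IsHomogeneousElem 𝒜 s)
    (K : Submodule R T) (hK : IsGradedSubmodule 𝒯 K)
    (hKp : IsGradedSPrime 𝒜 𝒯 s K)
    (hs : s ∉ (K.comap f).colon ⊤) :
    IsGradedSPrime 𝒜 ℳ s (K.comap f) := by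
  refine ⟨hs, fun r m hr hm hrm => ?_⟩
  obtain ⟨g, hmg⟩ := hm
  have hfm : SetLike.IsHomogeneousElem 𝒯 (f m) := ⟨g, hf g m hmg⟩
  have : r • f m ∈ K := by
    simpa [Submodule.mem_comap, map_smul] using hrm
  rcases hKp.2 r (f m) hr hfm this with h | h
  · left
    rw [Submodule.mem_colon] at h ⊢
    intro x hx
    simpa [Submodule.mem_comap, map_smul] using h (f x) trivial
  · right
    simpa [Submodule.mem_comap, map_smul] using h
end

section
/- Let f : M → T be a surjective graded R-homomorphism and N a graded s-prime submodule of M with ker(f) ⊆ N, where s is a nonzero homogeneous element of R. Then f(N) is a graded s-prime submodule of T. -/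
open DirectSum

variable {G R M : Type*}

lemma decompose_map_aux {G R M : Type*} {T : Type*} [AddGroup G] [DecidableEq G] [CommRing R]
    [AddCommGroup M] [Module R M] [AddCommGroup T] [Module R T]
    (ℳ : G → AddSubgroup M) (𝒯 : G → AddSubgroup T)
    [DirectSum.Decomposition ℳ] [DirectSum.Decomposition 𝒯]
    (f : M →ₗ[R] T) (hf : ∀ g : G, ∀ m ∈ ℳ g, f m ∈ 𝒯 g)
    (m : M) (g : G) :
    (DirectSum.decompose 𝒯 (f m) g : T) = f (DirectSum.decompose ℳ m g) := by
  induction m using DirectSum.Decomposition.inductionOn ℳ with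
  | zero => simp
  | @homogeneous i x =>
      by_cases h : i = g
      · subst h
        rw [DirectSum.decompose_of_mem_same ℳ x.2, DirectSum.decompose_of_mem_same 𝒯 (hf i x x.2)]
      · rw [DirectSum.decompose_of_mem_ne ℳ x.2 h, DirectSum.decompose_of_mem_ne 𝒯 (hf i x x.2) h,
          map_zero]
  | add a b ha hb => simp [ha, hb]

/-- image of a graded `s`-prime submodule containing the kernel, under a
surjective graded homomorphism, is graded `s`-prime. -/
theorem stmt_10 {T : Type*} [AddGroup G] [DecidableEq G] [CommRing R]
    [AddCommGroup M] [Module R M] [AddCommGroup T] [Module R T]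
    (𝒜 : G → AddSubgroup R) (ℳ : G → AddSubgroup M) (𝒯 : G → AddSubgroup T)
    [GradedRing 𝒜] [DirectSum.Decomposition ℳ] [SetLike.GradedSMul 𝒜 ℳ]
    [DirectSum.Decomposition 𝒯] [SetLike.GradedSMul 𝒜 𝒯]
    (f : M →ₗ[R] T) (hf : ∀ g : G, ∀ m ∈ ℳ g, f m ∈ 𝒯 g)
    (hsurj : Function.Surjective f)
    (s : R) (hs0 : s ≠ 0) (hsh : SetLike.IsHomogeneousElem 𝒜 s)
    (N : Submodule R M) (hN : IsGradedSubmodule ℳ N)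
    (hNp : IsGradedSPrime 𝒜 ℳ s N)
    (hker : LinearMap.ker f ≤ N) :
    IsGradedSPrime 𝒜 𝒯 s (N.map f) := by
  obtain ⟨hs, hp⟩ := hNp
  constructor
  · intro hcon
    apply hs
    rw [Submodule.mem_colon] at hcon ⊢
    intro m _
    have := hcon (f m) trivial
    rw [← map_smul] at this
    obtain ⟨n, hn, hfn⟩ := this
    have : s • m - n ∈ LinearMap.ker f := by
      simp [LinearMap.mem_ker, map_sub, hfn]
    have hmem : s • m - n ∈ N := hker this
    simpa using N.add_mem hmem hn
  · intro r t hr ht hrt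
    obtain ⟨g, htg⟩ := ht
    obtain ⟨m, hm⟩ := hsurj t
    set m' : M := (DirectSum.decompose ℳ m g : M) with hm'
    have hm'h : SetLike.IsHomogeneousElem ℳ m' := ⟨g, SetLike.coe_mem _⟩
    have hfm' : f m' = t := by
      rw [hm', ← decompose_map_aux ℳ 𝒯 f hf m g, hm, DirectSum.decompose_of_mem_same 𝒯 htg]
    have hrm' : r • m' ∈ N := by
      have : f (r • m') ∈ N.map f := by rw [map_smul, hfm']; exact hrt
      obtain ⟨n, hn, hfn⟩ := this
      have : r • m' - n ∈ LinearMap.ker f := by simp [LinearMap.mem_ker, map_sub, hfn]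
      have hmem : r • m' - n ∈ N := hker this
      simpa using N.add_mem hmem hn
    rcases hp r m' hr hm'h hrm' with h | h
    · left
      rw [Submodule.mem_colon] at h ⊢
      intro t' _
      obtain ⟨m'', hm''⟩ := hsurj t'
      rw [← hm'', ← map_smul]
      exact ⟨_, h m'' trivial, rfl⟩
    · right
      rw [← hfm', ← map_smul]
      exact ⟨_, h, rfl⟩
end

section
/- Let M be a graded R-module, L ⊆ N submodules of M with L graded. Then N is a graded s-prime submodule of M if and only if N/L is a graded s-prime submodule of M/L, for any nonzero homogeneous s. -/
open DirectSum

variable {G R M : Type*}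

/-- for a graded submodule `L ≤ N`, `N` is graded `s`-prime in `M` iff
`N/L` is graded `s`-prime in `M/L` (with the quotient grading `(M/L)_g = (M_g + L)/L`). -/
theorem stmt_11 [AddGroup G] [DecidableEq G] [CommRing R] [AddCommGroup M] [Module R M]
    (𝒜 : G → AddSubgroup R) (ℳ : G → AddSubgroup M)
    [GradedRing 𝒜] [DirectSum.Decomposition ℳ] [SetLike.GradedSMul 𝒜 ℳ]
    (L N : Submodule R M) (hL : IsGradedSubmodule ℳ L) (hLN : L ≤ N)
    (s : R) (hs0 : s ≠ 0) (hsh : SetLike.IsHomogeneousElem 𝒜 s) :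
    IsGradedSPrime 𝒜 ℳ s N ↔
      IsGradedSPrime 𝒜 (fun g : G => (ℳ g).map L.mkQ.toAddMonoidHom) s (N.map L.mkQ) := by
  classical
  have hmem : ∀ x : M, L.mkQ x ∈ N.map L.mkQ ↔ x ∈ N := by
    intro x
    constructor
    · rintro ⟨y, hy, hxy⟩
      have hxL : x - y ∈ L := (Submodule.Quotient.eq L).mp (by simpa using hxy.symm)
      simpa using N.add_mem (hLN hxL) hy
    · intro hx; exact ⟨x, hx, rfl⟩
  have hcolon : ∀ r : R, r ∈ (N.map L.mkQ).colon ⊤ ↔ r ∈ N.colon ⊤ := by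
    intro r
    simp only [Submodule.mem_colon, Submodule.mem_top, forall_true_left]
    constructor
    · intro h m
      have := h (L.mkQ m)
      rwa [← map_smul, hmem] at this
    · intro h x
      obtain ⟨m, rfl⟩ := L.mkQ_surjective x
      rw [← map_smul, hmem]
      exact h m
  constructor
  · rintro ⟨hns, hp⟩
    refine ⟨fun h => hns ((hcolon s).mp h), ?_⟩
    rintro r x hr ⟨g, hg⟩ hrx
    obtain ⟨m, hm, rfl⟩ := hg
    have hrm : r • m ∈ N := by
      rw [← hmem, map_smul]; exact hrx
    rcases hp r m hr ⟨g, hm⟩ hrm with h | h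
    · exact Or.inl ((hcolon _).mpr h)
    · right
      rw [show (L.mkQ.toAddMonoidHom m : M ⧸ L) = L.mkQ m from rfl, ← map_smul]
      exact (hmem _).mpr h
  · rintro ⟨hns, hp⟩
    refine ⟨fun h => hns ((hcolon s).mpr h), ?_⟩
    intro r m hr hm hrm
    obtain ⟨g, hmg⟩ := hm
    have hx : SetLike.IsHomogeneousElem (fun g : G => (ℳ g).map L.mkQ.toAddMonoidHom) (L.mkQ m) :=
      ⟨g, ⟨m, hmg, rfl⟩⟩
    have hrx : r • L.mkQ m ∈ N.map L.mkQ := by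
      rw [← map_smul]; exact (hmem _).mpr hrm
    rcases hp r (L.mkQ m) hr hx hrx with h | h
    · exact Or.inl ((hcolon _).mp h)
    · right
      rwa [← map_smul, hmem] at h
end

section
/- Let M be a graded R-module, N a graded submodule, and S ⊆ h(R) a multiplicatively closed set with (N :_R M) ∩ S = ∅. If N is a graded s-prime submodule for some s ∈ S, then the localization S⁻¹N is a graded prime S⁻¹R-submodule of S⁻¹M. -/
open DirectSum

variable {G R M : Type*}

/-- if `S ⊆ h(R)` is multiplicatively closed with `(N :_R M) ∩ S = ∅` and
`N` is graded `s`-prime for some `s ∈ S`, then `S⁻¹N` is a graded prime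
`S⁻¹R`-submodule of `S⁻¹M`, where homogeneity in the localization means being of the form
`a/t` with `a` homogeneous and `t ∈ S`. -/
theorem stmt_12 [AddGroup G] [DecidableEq G] [CommRing R] [AddCommGroup M] [Module R M]
    (𝒜 : G → AddSubgroup R) (ℳ : G → AddSubgroup M)
    [GradedRing 𝒜] [DirectSum.Decomposition ℳ] [SetLike.GradedSMul 𝒜 ℳ]
    (S' : Submonoid R) (hS0 : (0 : R) ∉ S') (hSh : ∀ x ∈ S', SetLike.IsHomogeneousElem 𝒜 x)
    (N : Submodule R M) (hN : IsGradedSubmodule ℳ N)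
    (hdisj : ∀ x ∈ S', x ∉ N.colon ⊤)
    (s : R) (hsS : s ∈ S') (hsp : IsGradedSPrime 𝒜 ℳ s N) :
    N.localized S' ≠ ⊤ ∧
    ∀ (r : Localization S') (x : LocalizedModule S' M),
      (∃ (a t : R) (ht : t ∈ S'), SetLike.IsHomogeneousElem 𝒜 a ∧ r = Localization.mk a ⟨t, ht⟩) →
      (∃ (m : M) (t : R) (ht : t ∈ S'), SetLike.IsHomogeneousElem ℳ m ∧
        x = LocalizedModule.mk m ⟨t, ht⟩) →
      r • x ∈ N.localized S' →
        r ∈ (N.localized S').colon ⊤ ∨ x ∈ N.localized S' := by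
  classical
  have hmem : ∀ x : LocalizedModule S' M,
      x ∈ N.localized S' ↔ ∃ n ∈ N, ∃ u : S', LocalizedModule.mk n u = x := by
    intro x
    simp only [Submodule.mem_localized', IsLocalizedModule.mk_eq_mk']
  have key : ∀ u ∈ S', ∀ m : M, SetLike.IsHomogeneousElem ℳ m → u • m ∈ N → s • m ∈ N := by
    intro u hu m hm h
    rcases hsp.2 u m (hSh u hu) hm h with h1 | h2
    · exact absurd h1 (hdisj _ (mul_mem hsS hu))
    · exact h2
  constructor
  · intro htop
    apply hsp.1
    rw [Submodule.mem_colon]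
    intro m _
    have hcomp : ∀ g : G, s • (DirectSum.decompose ℳ m g : M) ∈ N := by
      intro g
      set mg : M := (DirectSum.decompose ℳ m g : M) with hmg
      have hx : LocalizedModule.mk mg (1 : S') ∈ N.localized S' := htop ▸ Submodule.mem_top
      rw [hmem] at hx
      obtain ⟨n, hn, u, hu⟩ := hx
      rw [LocalizedModule.mk_eq] at hu
      obtain ⟨c, hc⟩ := hu
      simp only [Submonoid.smul_def, Submonoid.coe_one, one_smul] at hc
      have h1 : ((c : R) * (u : R)) • mg ∈ N := by
        rw [mul_smul, ← hc]
        exact N.smul_mem _ hn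
      exact key _ (mul_mem c.2 u.2) mg (SetLike.isHomogeneousElem_coe _) h1
    have hsum : ∑ g ∈ (DirectSum.decompose ℳ m).support,
        s • (DirectSum.decompose ℳ m g : M) ∈ N :=
      Submodule.sum_mem _ fun g _ => hcomp g
    rwa [← Finset.smul_sum, DirectSum.sum_support_decompose] at hsum
  · rintro r x ⟨a, t, ht, ha, rfl⟩ ⟨m, t', ht', hm, rfl⟩ hrx
    rw [LocalizedModule.mk_smul_mk, hmem] at hrx
    obtain ⟨n, hn, v, hv⟩ := hrx
    rw [LocalizedModule.mk_eq] at hv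
    obtain ⟨c, hc⟩ := hv
    simp only [Submonoid.smul_def, Submonoid.coe_mul] at hc
    have hN' : ((c : R) * (v : R) * a) • m ∈ N := by
      rw [mul_smul, mul_smul, ← hc]
      exact N.smul_mem _ (N.smul_mem _ hn)
    have hr' : SetLike.IsHomogeneousElem 𝒜 ((c : R) * (v : R) * a) :=
      SetLike.IsHomogeneousElem.mul (SetLike.IsHomogeneousElem.mul (hSh _ c.2) (hSh _ v.2)) ha
    rcases hsp.2 _ m hr' hm hN' with h1 | h2
    · left
      rw [Submodule.mem_colon]
      intro y _
      induction y using LocalizedModule.induction_on with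
      | _ m' w =>
        rw [LocalizedModule.mk_smul_mk, hmem]
        refine ⟨(s * ((c : R) * (v : R) * a)) • m',
          Submodule.mem_colon.mp h1 m' (Set.mem_univ _),
          (⟨s, hsS⟩ * c * v) * (⟨t, ht⟩ * w), ?_⟩
        rw [LocalizedModule.mk_eq]
        refine ⟨1, ?_⟩
        simp only [Submonoid.smul_def, Submonoid.coe_mul, one_smul, ← mul_smul]
        congr 1
        ring
    · right
      rw [hmem]
      refine ⟨s • m, h2, ⟨s, hsS⟩ * ⟨t', ht'⟩, ?_⟩
      rw [LocalizedModule.mk_eq]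
      refine ⟨1, ?_⟩
      simp only [Submonoid.smul_def, Submonoid.coe_mul, one_smul, ← mul_smul]
      congr 1
      ring
end

section
/- Let R₁, R₂ be G-graded commutative rings, R = R₁ × R₂, s = (s₁, s₂) a nonzero homogeneous element of R, and P = P₁ × P₂ a graded ideal of R. Then P is a graded s-prime ideal of R if and only if (P₁ is graded s₁-prime in R₁ and s₂ ∈ P₂) or (P₂ is graded s₂-prime in R₂ and s₁ ∈ P₁). -/
open DirectSum

variable {G R M : Type*}

/-- `P₁ × P₂` is graded `(s₁,s₂)`-prime in `R₁ × R₂` iff (`P₁` is graded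
`s₁`-prime and `s₂ ∈ P₂`) or (`P₂` is graded `s₂`-prime and `s₁ ∈ P₁`). -/
theorem stmt_13 {R₁ R₂ : Type*} [AddGroup G] [DecidableEq G] [CommRing R₁] [CommRing R₂]
    (𝒜₁ : G → AddSubgroup R₁) (𝒜₂ : G → AddSubgroup R₂)
    [GradedRing 𝒜₁] [GradedRing 𝒜₂]
    (P₁ : Ideal R₁) (P₂ : Ideal R₂)
    (hP₁ : IsGradedIdeal 𝒜₁ P₁) (hP₂ : IsGradedIdeal 𝒜₂ P₂)
    (s₁ : R₁) (s₂ : R₂) (hs0 : (s₁, s₂) ≠ (0, 0))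
    (hsh : SetLike.IsHomogeneousElem (fun g : G => (𝒜₁ g).prod (𝒜₂ g)) (s₁, s₂)) :
    IsGradedSPrimeIdeal (fun g : G => (𝒜₁ g).prod (𝒜₂ g)) (s₁, s₂) (P₁.prod P₂) ↔
      (IsGradedSPrimeIdeal 𝒜₁ s₁ P₁ ∧ s₂ ∈ P₂) ∨
      (IsGradedSPrimeIdeal 𝒜₂ s₂ P₂ ∧ s₁ ∈ P₁) := by
  constructor
  · rintro ⟨hns, hmul⟩
    have hns' : ¬(s₁ ∈ P₁ ∧ s₂ ∈ P₂) := fun h => hns ((Ideal.mem_prod _ _).mpr h)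
    have h10 : SetLike.IsHomogeneousElem (fun g : G => (𝒜₁ g).prod (𝒜₂ g)) ((1, 0) : R₁ × R₂) :=
      ⟨0, AddSubgroup.mem_prod.mpr ⟨SetLike.one_mem_graded _, (𝒜₂ 0).zero_mem⟩⟩
    have h01 : SetLike.IsHomogeneousElem (fun g : G => (𝒜₁ g).prod (𝒜₂ g)) ((0, 1) : R₁ × R₂) :=
      ⟨0, AddSubgroup.mem_prod.mpr ⟨(𝒜₁ 0).zero_mem, SetLike.one_mem_graded _⟩⟩
    have hkey := hmul (1, 0) (0, 1) h10 h01
      (by simp [Ideal.mem_prod])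
    rcases hkey with h | h
    · -- (s₁*1, s₂*0) ∈ P, so s₁ ∈ P₁
      have hs₁P : s₁ ∈ P₁ := by simpa using ((Ideal.mem_prod _ _).mp h).1
      have hs₂P : s₂ ∉ P₂ := fun h2 => hns' ⟨hs₁P, h2⟩
      right
      refine ⟨⟨hs₂P, fun a b ⟨g, ha⟩ ⟨g', hb⟩ hab => ?_⟩, hs₁P⟩
      have := hmul (0, a) (0, b)
        ⟨g, AddSubgroup.mem_prod.mpr ⟨(𝒜₁ g).zero_mem, ha⟩⟩
        ⟨g', AddSubgroup.mem_prod.mpr ⟨(𝒜₁ g').zero_mem, hb⟩⟩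
        ((Ideal.mem_prod _ _).mpr ⟨by simpa using P₁.zero_mem, by simpa using hab⟩)
      rcases this with h' | h'
      · exact Or.inl (by simpa using ((Ideal.mem_prod _ _).mp h').2)
      · exact Or.inr (by simpa using ((Ideal.mem_prod _ _).mp h').2)
    · have hs₂P : s₂ ∈ P₂ := by simpa using ((Ideal.mem_prod _ _).mp h).2
      have hs₁P : s₁ ∉ P₁ := fun h1 => hns' ⟨h1, hs₂P⟩
      left
      refine ⟨⟨hs₁P, fun a b ⟨g, ha⟩ ⟨g', hb⟩ hab => ?_⟩, hs₂P⟩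
      have := hmul (a, 0) (b, 0)
        ⟨g, AddSubgroup.mem_prod.mpr ⟨ha, (𝒜₂ g).zero_mem⟩⟩
        ⟨g', AddSubgroup.mem_prod.mpr ⟨hb, (𝒜₂ g').zero_mem⟩⟩
        ((Ideal.mem_prod _ _).mpr ⟨by simpa using hab, by simpa using P₂.zero_mem⟩)
      rcases this with h' | h'
      · exact Or.inl (by simpa using ((Ideal.mem_prod _ _).mp h').1)
      · exact Or.inr (by simpa using ((Ideal.mem_prod _ _).mp h').1)
  · rintro (⟨⟨hs₁, hpr⟩, hs₂⟩ | ⟨⟨hs₂, hpr⟩, hs₁⟩)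
    · refine ⟨fun h => hs₁ ((Ideal.mem_prod _ _).mp h).1, ?_⟩
      rintro ⟨a₁, a₂⟩ ⟨b₁, b₂⟩ ⟨g, ha⟩ ⟨g', hb⟩ hab
      have ha' := AddSubgroup.mem_prod.mp ha
      have hb' := AddSubgroup.mem_prod.mp hb
      rcases hpr a₁ b₁ ⟨g, ha'.1⟩ ⟨g', hb'.1⟩ ((Ideal.mem_prod _ _).mp hab).1 with h | h
      · exact Or.inl ((Ideal.mem_prod _ _).mpr ⟨h, Ideal.mul_mem_right _ _ hs₂⟩)
      · exact Or.inr ((Ideal.mem_prod _ _).mpr ⟨h, Ideal.mul_mem_right _ _ hs₂⟩)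
    · refine ⟨fun h => hs₂ ((Ideal.mem_prod _ _).mp h).2, ?_⟩
      rintro ⟨a₁, a₂⟩ ⟨b₁, b₂⟩ ⟨g, ha⟩ ⟨g', hb⟩ hab
      have ha' := AddSubgroup.mem_prod.mp ha
      have hb' := AddSubgroup.mem_prod.mp hb
      rcases hpr a₂ b₂ ⟨g, ha'.2⟩ ⟨g', hb'.2⟩ ((Ideal.mem_prod _ _).mp hab).2 with h | h
      · exact Or.inl ((Ideal.mem_prod _ _).mpr ⟨Ideal.mul_mem_right _ _ hs₁, h⟩)
      · exact Or.inr ((Ideal.mem_prod _ _).mpr ⟨Ideal.mul_mem_right _ _ hs₁, h⟩)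
end

section
/- Let M₁ be a graded R₁-module, M₂ a graded R₂-module, R = R₁ × R₂, M = M₁ × M₂, s = (s₁, s₂) a nonzero homogeneous element of R, and L = N × K a graded R-submodule of M. Then L is graded s-prime in M if and only if (N is graded s₁-prime in M₁ and s₂ ∈ (K :_{R₂} M₂)) or (K is graded s₂-prime in M₂ and s₁ ∈ (N :_{R₁} M₁)). -/
open DirectSum

variable {G R M : Type*}

section Prod

variable {R₁ R₂ M₁ M₂ : Type*} [CommRing R₁] [CommRing R₂]
  [AddCommGroup M₁] [AddCommGroup M₂] [Module R₁ M₁] [Module R₂ M₂]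

/-- `M₁` as a module over `R₁ × R₂` via the first projection. -/
instance prodFstModule : Module (R₁ × R₂) M₁ := Module.compHom M₁ (RingHom.fst R₁ R₂)

/-- `M₂` as a module over `R₁ × R₂` via the second projection. -/
instance prodSndModule : Module (R₁ × R₂) M₂ := Module.compHom M₂ (RingHom.snd R₁ R₂)

/-- The product `N × K` as an `(R₁ × R₂)`-submodule of `M₁ × M₂`. -/
def prodSubmodule (N : Submodule R₁ M₁) (K : Submodule R₂ M₂) :
    Submodule (R₁ × R₂) (M₁ × M₂) where
  carrier := {p | p.1 ∈ N ∧ p.2 ∈ K}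
  add_mem' := fun h h' => ⟨N.add_mem h.1 h'.1, K.add_mem h.2 h'.2⟩
  zero_mem' := ⟨N.zero_mem, K.zero_mem⟩
  smul_mem' := fun r _ h => ⟨N.smul_mem r.1 h.1, K.smul_mem r.2 h.2⟩

lemma smul_prod_def' (a : R₁) (b : R₂) (m : M₁) (n : M₂) :
    ((a, b) : R₁ × R₂) • ((m, n) : M₁ × M₂) = (a • m, b • n) := rfl

lemma mem_prodSubmodule (N : Submodule R₁ M₁) (K : Submodule R₂ M₂) (p : M₁ × M₂) :
    p ∈ prodSubmodule N K ↔ p.1 ∈ N ∧ p.2 ∈ K := Iff.rfl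

lemma mem_colon_prod (N : Submodule R₁ M₁) (K : Submodule R₂ M₂) (a : R₁) (b : R₂) :
    (a, b) ∈ (prodSubmodule N K).colon ⊤ ↔ a ∈ N.colon ⊤ ∧ b ∈ K.colon ⊤ := by
  simp only [Submodule.mem_colon, Submodule.mem_top, forall_true_left, true_implies]
  constructor
  · intro h
    exact ⟨fun m _ => (h (m, 0) trivial).1, fun n _ => (h (0, n) trivial).2⟩
  · rintro ⟨h1, h2⟩ p _
    exact ⟨h1 p.1 trivial, h2 p.2 trivial⟩

/-- `L = N × K` is graded `(s₁,s₂)`-prime in `M₁ × M₂` iff (`N` is graded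
`s₁`-prime and `s₂ ∈ (K :_{R₂} M₂)`) or (`K` is graded `s₂`-prime and
`s₁ ∈ (N :_{R₁} M₁)`). -/
theorem stmt_14 [AddGroup G] [DecidableEq G]
    (𝒜₁ : G → AddSubgroup R₁) (𝒜₂ : G → AddSubgroup R₂)
    (ℳ₁ : G → AddSubgroup M₁) (ℳ₂ : G → AddSubgroup M₂)
    [GradedRing 𝒜₁] [GradedRing 𝒜₂]
    [DirectSum.Decomposition ℳ₁] [SetLike.GradedSMul 𝒜₁ ℳ₁]
    [DirectSum.Decomposition ℳ₂] [SetLike.GradedSMul 𝒜₂ ℳ₂]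
    (N : Submodule R₁ M₁) (K : Submodule R₂ M₂)
    (hN : IsGradedSubmodule ℳ₁ N) (hK : IsGradedSubmodule ℳ₂ K)
    (s₁ : R₁) (s₂ : R₂) (hs0 : (s₁, s₂) ≠ (0, 0))
    (hsh : SetLike.IsHomogeneousElem (fun g : G => (𝒜₁ g).prod (𝒜₂ g)) (s₁, s₂)) :
    IsGradedSPrime (fun g : G => (𝒜₁ g).prod (𝒜₂ g))
        (fun g : G => (ℳ₁ g).prod (ℳ₂ g)) (s₁, s₂) (prodSubmodule N K) ↔
      (IsGradedSPrime 𝒜₁ ℳ₁ s₁ N ∧ s₂ ∈ K.colon ⊤) ∨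
      (IsGradedSPrime 𝒜₂ ℳ₂ s₂ K ∧ s₁ ∈ N.colon ⊤) := by
  classical
  constructor
  · rintro ⟨hs, hprime⟩
    rw [mem_colon_prod, not_and_or] at hs
    -- key: if s₁ ∉ N.colon ⊤ then s₂ ∈ K.colon ⊤
    have key₂ : s₁ ∉ N.colon ⊤ → s₂ ∈ K.colon ⊤ := by
      intro h1
      rw [Submodule.mem_colon]
      intro m₂ _
      have : s₂ • m₂ =
          ∑ g ∈ DFinsupp.support (DirectSum.decompose ℳ₂ m₂),
            s₂ • (DirectSum.decompose ℳ₂ m₂ g : M₂) := by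
        rw [← Finset.smul_sum, DirectSum.sum_support_decompose]
      rw [this]
      apply Submodule.sum_mem
      intro g _
      have hh := hprime (1, 0) (0, (DirectSum.decompose ℳ₂ m₂ g : M₂))
        ⟨0, AddSubgroup.mem_prod.mpr ⟨SetLike.one_mem_graded 𝒜₁, (𝒜₂ 0).zero_mem⟩⟩
        ⟨g, AddSubgroup.mem_prod.mpr ⟨(ℳ₁ g).zero_mem, SetLike.coe_mem _⟩⟩
        (by rw [smul_prod_def']; exact ⟨by simpa using N.zero_mem, by simpa using K.zero_mem⟩)
      rcases hh with hh | hh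
      · exfalso
        rw [Prod.mk_mul_mk, mem_colon_prod] at hh
        exact h1 (by simpa using hh.1)
      · rw [smul_prod_def'] at hh
        exact hh.2
    have key₁ : s₂ ∉ K.colon ⊤ → s₁ ∈ N.colon ⊤ := by
      intro h2
      rw [Submodule.mem_colon]
      intro m₁ _
      have : s₁ • m₁ =
          ∑ g ∈ DFinsupp.support (DirectSum.decompose ℳ₁ m₁),
            s₁ • (DirectSum.decompose ℳ₁ m₁ g : M₁) := by
        rw [← Finset.smul_sum, DirectSum.sum_support_decompose]
      rw [this]
      apply Submodule.sum_mem
      intro g _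
      have hh := hprime (0, 1) ((DirectSum.decompose ℳ₁ m₁ g : M₁), 0)
        ⟨0, AddSubgroup.mem_prod.mpr ⟨(𝒜₁ 0).zero_mem, SetLike.one_mem_graded 𝒜₂⟩⟩
        ⟨g, AddSubgroup.mem_prod.mpr ⟨SetLike.coe_mem _, (ℳ₂ g).zero_mem⟩⟩
        (by rw [smul_prod_def']; exact ⟨by simpa using N.zero_mem, by simpa using K.zero_mem⟩)
      rcases hh with hh | hh
      · exfalso
        rw [Prod.mk_mul_mk, mem_colon_prod] at hh
        exact h2 (by simpa using hh.2)
      · rw [smul_prod_def'] at hh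
        exact hh.1
    rcases hs with h1 | h2
    · left
      refine ⟨⟨h1, ?_⟩, key₂ h1⟩
      intro r₁ m₁ ⟨g, hr⟩ ⟨g', hm⟩ hrm
      have hh := hprime (r₁, 0) (m₁, 0)
        ⟨g, AddSubgroup.mem_prod.mpr ⟨hr, (𝒜₂ g).zero_mem⟩⟩
        ⟨g', AddSubgroup.mem_prod.mpr ⟨hm, (ℳ₂ g').zero_mem⟩⟩
        (by rw [smul_prod_def']; exact ⟨hrm, by simpa using K.zero_mem⟩)
      rcases hh with hh | hh
      · rw [Prod.mk_mul_mk, mem_colon_prod] at hh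
        exact Or.inl hh.1
      · rw [smul_prod_def'] at hh
        exact Or.inr hh.1
    · right
      refine ⟨⟨h2, ?_⟩, key₁ h2⟩
      intro r₂ m₂ ⟨g, hr⟩ ⟨g', hm⟩ hrm
      have hh := hprime (0, r₂) (0, m₂)
        ⟨g, AddSubgroup.mem_prod.mpr ⟨(𝒜₁ g).zero_mem, hr⟩⟩
        ⟨g', AddSubgroup.mem_prod.mpr ⟨(ℳ₁ g').zero_mem, hm⟩⟩
        (by rw [smul_prod_def']; exact ⟨by simpa using N.zero_mem, hrm⟩)
      rcases hh with hh | hh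
      · rw [Prod.mk_mul_mk, mem_colon_prod] at hh
        exact Or.inl hh.2
      · rw [smul_prod_def'] at hh
        exact Or.inr hh.2
  · rintro (⟨⟨hs1, hp⟩, hs2⟩ | ⟨⟨hs2, hp⟩, hs1⟩)
    · refine ⟨?_, ?_⟩
      · rw [mem_colon_prod]
        exact fun h => hs1 h.1
      · rintro ⟨r₁, r₂⟩ ⟨m₁, m₂⟩ ⟨g, hr⟩ ⟨g', hm⟩ hrm
        rw [AddSubgroup.mem_prod] at hr hm
        rw [smul_prod_def', mem_prodSubmodule] at hrm
        rcases hp r₁ m₁ ⟨g, hr.1⟩ ⟨g', hm.1⟩ hrm.1 with h | h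
        · left
          rw [Prod.mk_mul_mk, mem_colon_prod]
          exact ⟨h, (K.colon ⊤).mul_mem_right r₂ hs2⟩
        · right
          rw [smul_prod_def', mem_prodSubmodule]
          exact ⟨h, by rw [Submodule.mem_colon] at hs2; exact hs2 m₂ trivial⟩
    · refine ⟨?_, ?_⟩
      · rw [mem_colon_prod]
        exact fun h => hs2 h.2
      · rintro ⟨r₁, r₂⟩ ⟨m₁, m₂⟩ ⟨g, hr⟩ ⟨g', hm⟩ hrm
        rw [AddSubgroup.mem_prod] at hr hm
        rw [smul_prod_def', mem_prodSubmodule] at hrm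
        rcases hp r₂ m₂ ⟨g, hr.2⟩ ⟨g', hm.2⟩ hrm.2 with h | h
        · left
          rw [Prod.mk_mul_mk, mem_colon_prod]
          exact ⟨(N.colon ⊤).mul_mem_right r₁ hs1, h⟩
        · right
          rw [smul_prod_def', mem_prodSubmodule]
          exact ⟨by rw [Submodule.mem_colon] at hs1; exact hs1 m₁ trivial, h⟩

end Prod
end

section
/- Let G be an abelian group, M a G-graded R-module, s a nonzero homogeneous element of R, and P a graded ideal of R with s ∉ P. Then P is a graded s-prime ideal of R if and only if P(+)M is a graded (s,0)-prime ideal of the idealization R(+)M. -/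
open DirectSum

variable {G R M : Type*}

section Idealization

variable [CommRing R] [AddCommGroup M] [Module R M] [Module Rᵐᵒᵖ M] [IsCentralScalar R M]

/-- The grading `(R(+)M)_g = R_g (+) M_g` of the idealization. -/
def tseGrade (𝒜 : G → AddSubgroup R) (ℳ : G → AddSubgroup M) (g : G) :
    AddSubgroup (TrivSqZeroExt R M) where
  carrier := {a | a.fst ∈ 𝒜 g ∧ a.snd ∈ ℳ g}
  add_mem' := fun h h' => ⟨(𝒜 g).add_mem h.1 h'.1, (ℳ g).add_mem h.2 h'.2⟩
  zero_mem' := ⟨(𝒜 g).zero_mem, (ℳ g).zero_mem⟩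
  neg_mem' := fun h => ⟨(𝒜 g).neg_mem h.1, (ℳ g).neg_mem h.2⟩

/-- The ideal `P(+)M` of the idealization `R(+)M`. -/
def idealize (P : Ideal R) : Ideal (TrivSqZeroExt R M) where
  carrier := {a | a.fst ∈ P}
  add_mem' := fun h h' => P.add_mem h h'
  zero_mem' := P.zero_mem
  smul_mem' := fun c a ha => by
    show (c * a).fst ∈ P
    rw [TrivSqZeroExt.fst_mul]
    exact P.mul_mem_left c.fst ha

/-- for `G` abelian, a graded ideal `P` with `s ∉ P` is graded `s`-prime iff
`P(+)M` is a graded `(s,0)`-prime ideal of the idealization `R(+)M`. -/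
theorem stmt_15 [AddCommGroup G] [DecidableEq G]
    (𝒜 : G → AddSubgroup R) (ℳ : G → AddSubgroup M)
    [GradedRing 𝒜] [DirectSum.Decomposition ℳ] [SetLike.GradedSMul 𝒜 ℳ]
    (s : R) (hs0 : s ≠ 0) (hsh : SetLike.IsHomogeneousElem 𝒜 s)
    (P : Ideal R) (hP : IsGradedIdeal 𝒜 P) (hsP : s ∉ P) :
    IsGradedSPrimeIdeal 𝒜 s P ↔
      IsGradedSPrimeIdeal (tseGrade 𝒜 ℳ) (TrivSqZeroExt.inl s) (idealize P) := by
  have hmem : ∀ a : TrivSqZeroExt R M, a ∈ idealize (M := M) P ↔ a.fst ∈ P := fun _ => Iff.rfl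
  constructor
  · rintro ⟨-, h2⟩
    refine ⟨hsP, ?_⟩
    rintro a b ⟨g, hag, -⟩ ⟨g', hbg, -⟩ hab
    rw [hmem, TrivSqZeroExt.fst_mul] at hab
    rcases h2 a.fst b.fst ⟨g, hag⟩ ⟨g', hbg⟩ hab with h | h
    · exact Or.inl (by rw [hmem, TrivSqZeroExt.fst_mul, TrivSqZeroExt.fst_inl]; exact h)
    · exact Or.inr (by rw [hmem, TrivSqZeroExt.fst_mul, TrivSqZeroExt.fst_inl]; exact h)
  · rintro ⟨-, h2⟩
    refine ⟨hsP, ?_⟩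
    rintro a b ⟨g, hag⟩ ⟨g', hbg⟩ hab
    have ha' : SetLike.IsHomogeneousElem (tseGrade 𝒜 ℳ) (TrivSqZeroExt.inl a : TrivSqZeroExt R M) :=
      ⟨g, hag, (ℳ g).zero_mem⟩
    have hb' : SetLike.IsHomogeneousElem (tseGrade 𝒜 ℳ) (TrivSqZeroExt.inl b : TrivSqZeroExt R M) :=
      ⟨g', hbg, (ℳ g').zero_mem⟩
    have : (TrivSqZeroExt.inl a * TrivSqZeroExt.inl b : TrivSqZeroExt R M) ∈ idealize (M := M) P := by
      rw [hmem, TrivSqZeroExt.fst_mul, TrivSqZeroExt.fst_inl, TrivSqZeroExt.fst_inl]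
      exact hab
    rcases h2 _ _ ha' hb' this with h | h
    · rw [hmem, TrivSqZeroExt.fst_mul, TrivSqZeroExt.fst_inl, TrivSqZeroExt.fst_inl] at h
      exact Or.inl h
    · rw [hmem, TrivSqZeroExt.fst_mul, TrivSqZeroExt.fst_inl, TrivSqZeroExt.fst_inl] at h
      exact Or.inr h

end Idealization
end

section
/- Let M be a graded R-module, N a graded submodule, and s, t nonzero homogeneous elements of R with st ∉ (N :_R M). If N is graded s-prime, then (N :_M t) ⊆ (N :_M s). -/
open DirectSum

variable {G R M : Type*}

lemma decompose_smul_aux [AddGroup G] [DecidableEq G] [CommRing R] [AddCommGroup M] [Module R M]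
    (𝒜 : G → AddSubgroup R) (ℳ : G → AddSubgroup M)
    [GradedRing 𝒜] [DirectSum.Decomposition ℳ] [SetLike.GradedSMul 𝒜 ℳ]
    {t : R} {d : G} (ht : t ∈ 𝒜 d) (x : M) (g : G) :
    (DirectSum.decompose ℳ (t • x) (d + g) : M) = t • (DirectSum.decompose ℳ x g : M) := by
  induction x using DirectSum.Decomposition.inductionOn ℳ with
  | zero => simp
  | @homogeneous j m =>
    obtain ⟨m, hm⟩ := m
    have hmem : t • m ∈ ℳ (d + j) := SetLike.GradedSMul.smul_mem ht hm
    by_cases hj : j = g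
    · subst hj
      rw [DirectSum.decompose_of_mem_same ℳ hmem, DirectSum.decompose_of_mem_same ℳ hm]
    · rw [DirectSum.decompose_of_mem_ne ℳ hmem (by simpa using hj),
        DirectSum.decompose_of_mem_ne ℳ hm hj, smul_zero]
  | add a b ha hb =>
    rw [smul_add, DirectSum.decompose_add, DirectSum.decompose_add, DirectSum.add_apply,
      DirectSum.add_apply, AddMemClass.coe_add, AddMemClass.coe_add, ha, hb, smul_add]

/-- if `st ∉ (N :_R M)` and `N` is graded `s`-prime, then
`(N :_M t) ⊆ (N :_M s)`. -/
theorem stmt_16 [AddGroup G] [DecidableEq G] [CommRing R] [AddCommGroup M] [Module R M]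
    (𝒜 : G → AddSubgroup R) (ℳ : G → AddSubgroup M)
    [GradedRing 𝒜] [DirectSum.Decomposition ℳ] [SetLike.GradedSMul 𝒜 ℳ]
    (N : Submodule R M) (hN : IsGradedSubmodule ℳ N)
    (s t : R) (hs0 : s ≠ 0) (ht0 : t ≠ 0)
    (hsh : SetLike.IsHomogeneousElem 𝒜 s) (hth : SetLike.IsHomogeneousElem 𝒜 t)
    (hst : s * t ∉ N.colon ⊤)
    (h : IsGradedSPrime 𝒜 ℳ s N) :
    N.comap (LinearMap.lsmul R M t) ≤ N.comap (LinearMap.lsmul R M s) := by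
  classical
  intro m hm
  simp only [Submodule.mem_comap, LinearMap.lsmul_apply] at hm ⊢
  obtain ⟨d, htd⟩ := hth
  -- each component
  have key : ∀ g : G, s • (DirectSum.decompose ℳ m g : M) ∈ N := by
    intro g
    have h1 : t • (DirectSum.decompose ℳ m g : M) ∈ N := by
      rw [← decompose_smul_aux 𝒜 ℳ htd m g]
      exact hN _ hm _
    rcases h.2 t _ ⟨d, htd⟩ ⟨g, (DirectSum.decompose ℳ m g).2⟩ h1 with h2 | h2
    · exact absurd h2 hst
    · exact h2
  have : s • m = ∑ g ∈ (DirectSum.decompose ℳ m).support,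
      s • (DirectSum.decompose ℳ m g : M) := by
    conv_lhs => rw [← DirectSum.sum_support_decompose ℳ m]
    rw [Finset.smul_sum]
  rw [this]
  exact Submodule.sum_mem N fun g _ => key g
end

section
/- Let M be a graded R-module and N a graded submodule. Consider the family D_N = {(N :_M t) : t nonzero homogeneous in R with t ∉ (N :_R M)}. If (N :_M s) is a maximal element of D_N with respect to inclusion, then (N :_M s) is a graded prime submodule of M, and consequently N is a graded s-prime submodule of M. -/
open DirectSum

variable {G R M : Type*}

/-- if `(N :_M s)` is maximal (w.r.t. inclusion) in the family
`D_N = {(N :_M t) : t` nonzero homogeneous, `t ∉ (N :_R M)}`, then `(N :_M s)` is a graded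
prime submodule of `M`, and consequently `N` is graded `s`-prime. -/
theorem stmt_18 [AddGroup G] [DecidableEq G] [CommRing R] [AddCommGroup M] [Module R M]
    (𝒜 : G → AddSubgroup R) (ℳ : G → AddSubgroup M)
    [GradedRing 𝒜] [DirectSum.Decomposition ℳ] [SetLike.GradedSMul 𝒜 ℳ]
    (N : Submodule R M) (hN : IsGradedSubmodule ℳ N) (hNtop : N ≠ ⊤)
    (s : R) (hs0 : s ≠ 0) (hsh : SetLike.IsHomogeneousElem 𝒜 s) (hsN : s ∉ N.colon ⊤)
    (hmax : ∀ t : R, t ≠ 0 → SetLike.IsHomogeneousElem 𝒜 t → t ∉ N.colon ⊤ →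
      N.comap (LinearMap.lsmul R M s) ≤ N.comap (LinearMap.lsmul R M t) →
      N.comap (LinearMap.lsmul R M s) = N.comap (LinearMap.lsmul R M t)) :
    IsGradedPrime 𝒜 ℳ (N.comap (LinearMap.lsmul R M s)) ∧ IsGradedSPrime 𝒜 ℳ s N := by
  set K := N.comap (LinearMap.lsmul R M s) with hK
  have memK : ∀ x : M, x ∈ K ↔ s • x ∈ N := fun x => Iff.rfl
  have hKne : K ≠ ⊤ := by
    intro h
    apply hsN
    rw [Submodule.mem_colon]
    intro p _
    exact (memK p).mp (h ▸ Submodule.mem_top)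
  have hprime : IsGradedPrime 𝒜 ℳ K := by
    refine ⟨hKne, fun r m hr hm hrm => ?_⟩
    by_cases hsr : s * r ∈ N.colon ⊤
    · left
      rw [Submodule.mem_colon]
      intro p _
      rw [memK, smul_smul]
      exact Submodule.mem_colon.mp hsr p trivial
    · right
      have hsr0 : s * r ≠ 0 := by
        intro h
        apply hsr
        rw [h, Submodule.mem_colon]
        intro p _
        simp
      have hsrh : SetLike.IsHomogeneousElem 𝒜 (s * r) := SetLike.IsHomogeneousElem.mul hsh hr
      have hle : K ≤ N.comap (LinearMap.lsmul R M (s * r)) := by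
        intro x hx
        have hx' : s • x ∈ N := (memK x).mp hx
        show (s * r) • x ∈ N
        rw [mul_comm, mul_smul]
        exact N.smul_mem r hx'
      have heq := hmax (s * r) hsr0 hsrh hsr hle
      have hmem : m ∈ N.comap (LinearMap.lsmul R M (s * r)) := by
        show (s * r) • m ∈ N
        rw [mul_smul]
        exact (memK _).mp hrm
      rw [← heq] at hmem
      exact hmem
  refine ⟨hprime, hsN, fun r m hr hm hrm => ?_⟩
  have hrmK : r • m ∈ K := (memK _).mpr (N.smul_mem s hrm)
  rcases hprime.2 r m hr hm hrmK with h | h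
  · left
    rw [Submodule.mem_colon]
    intro p _
    have hp := (memK _).mp (Submodule.mem_colon.mp h p trivial)
    rwa [mul_smul]
  · right
    exact (memK m).mp h
end

section
/- Let (R,G) be a crossed product grading (every homogeneous component of the support contains a unit) and I = ⊕_{g∈G} I_g a graded ideal of R. Then I is a graded s-prime ideal for some nonzero homogeneous s if and only if I_e = I ∩ R_e is an s'-prime ideal of R_e for some t ∈ R_e, in the sense that t ∉ I_e and for a, b ∈ R_e, ab ∈ I_e implies ta ∈ I_e or tb ∈ I_e. -/
open DirectSum

variable {G R M : Type*}

lemma hom_inv [AddGroup G] [DecidableEq G] [CommRing R]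
    (𝒜 : G → AddSubgroup R) [GradedRing 𝒜] {u : R} {g : G} (hu : u ∈ 𝒜 g)
    (hunit : IsUnit u) : ∃ w, w ∈ 𝒜 (-g) ∧ u * w = 1 := by
  obtain ⟨U, rfl⟩ := hunit
  refine ⟨DirectSum.decompose 𝒜 (↑U⁻¹ : R) (-g), SetLike.coe_mem _, ?_⟩
  have h := DirectSum.coe_decompose_mul_add_of_left_mem 𝒜 (b := (↑U⁻¹ : R)) (j := -g) hu
  rw [← h, add_neg_cancel, Units.mul_inv,
    DirectSum.decompose_of_mem_same 𝒜 (SetLike.one_mem_graded 𝒜)]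

/-- for a crossed product grading, a graded ideal `I` is graded `s`-prime for
some nonzero homogeneous `s` iff `I_e = I ∩ R_e` is a `t`-prime ideal of `R_e` for some
`t ∈ R_e`, i.e. `t ∉ I_e` and for `a, b ∈ R_e`, `ab ∈ I_e` implies `ta ∈ I_e` or
`tb ∈ I_e`. -/
theorem stmt_19 [AddGroup G] [DecidableEq G] [CommRing R]
    (𝒜 : G → AddSubgroup R) [GradedRing 𝒜]
    (hcross : ∀ g : G, (∃ x ∈ 𝒜 g, x ≠ 0) → ∃ u ∈ 𝒜 g, IsUnit u)
    (I : Ideal R) (hI : IsGradedIdeal 𝒜 I) :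
    (∃ s : R, s ≠ 0 ∧ SetLike.IsHomogeneousElem 𝒜 s ∧ IsGradedSPrimeIdeal 𝒜 s I) ↔
    (∃ t : R, t ∈ 𝒜 0 ∧ t ∉ I ∧
      ∀ a b : R, a ∈ 𝒜 0 → b ∈ 𝒜 0 → a * b ∈ I → t * a ∈ I ∨ t * b ∈ I) := by
  constructor
  · rintro ⟨s, hs0, ⟨g, hsg⟩, hsnI, hsp⟩
    obtain ⟨u, hug, huu⟩ := hcross g ⟨s, hsg, hs0⟩
    obtain ⟨w, hw, huw⟩ := hom_inv 𝒜 hug huu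
    refine ⟨s * w, by simpa using SetLike.mul_mem_graded hsg hw, ?_, ?_⟩
    · intro h
      apply hsnI
      have : s = (s * w) * u := by rw [mul_assoc, mul_comm w u, huw, mul_one]
      rw [this]; exact I.mul_mem_right _ h
    · intro a b ha hb hab
      rcases hsp a b ⟨0, ha⟩ ⟨0, hb⟩ hab with h | h
      · left
        have : s * w * a = (s * a) * w := by ring
        rw [this]; exact I.mul_mem_right _ h
      · right
        have : s * w * b = (s * b) * w := by ring
        rw [this]; exact I.mul_mem_right _ h
  · rintro ⟨t, ht0, htnI, htp⟩
    have ht0' : t ≠ 0 := fun h => htnI (h ▸ I.zero_mem)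
    refine ⟨t, ht0', ⟨0, ht0⟩, htnI, ?_⟩
    intro a b ⟨g, hag⟩ ⟨h, hbh⟩ hab
    by_cases ha0 : a = 0
    · left; rw [ha0, mul_zero]; exact I.zero_mem
    by_cases hb0 : b = 0
    · right; rw [hb0, mul_zero]; exact I.zero_mem
    obtain ⟨u, hug, huu⟩ := hcross g ⟨a, hag, ha0⟩
    obtain ⟨w, hw, huw⟩ := hom_inv 𝒜 hug huu
    obtain ⟨v, hvh, hvu⟩ := hcross h ⟨b, hbh, hb0⟩
    obtain ⟨x, hx, hvx⟩ := hom_inv 𝒜 hvh hvu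
    have haw : a * w ∈ 𝒜 0 := by simpa using SetLike.mul_mem_graded hag hw
    have hbx : b * x ∈ 𝒜 0 := by simpa using SetLike.mul_mem_graded hbh hx
    have hmem : (a * w) * (b * x) ∈ I := by
      have : (a * w) * (b * x) = (a * b) * (w * x) := by ring
      rw [this]; exact I.mul_mem_right _ hab
    rcases htp _ _ haw hbx hmem with hc | hc
    · left
      have : t * a = (t * (a * w)) * u := by
        rw [mul_assoc, mul_assoc, mul_comm w u, huw, mul_one]
      rw [this]; exact I.mul_mem_right _ hc
    · right
      have : t * b = (t * (b * x)) * v := by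
        rw [mul_assoc, mul_assoc, mul_comm x v, hvx, mul_one]
      rw [this]; exact I.mul_mem_right _ hc
end
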